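/- arXiv:1708.02724 — 4 statements merged into one kernel-verified Lean document; each statement's English description precedes it below -/
import Mathlib

section
/- Product rule for scale-invariant Hölder spaces: Let 0 < α ≤ 1 and let D ⊆ ℝ² with 0 ∈ D. There is a constant C > 0, depending only on α, such that for all f : D → ℝ with f(0) = 0 and ‖f‖_{C^α(D)} < ∞ and all h : D → ℝ with ‖h‖_{∘C^α(D)} < ∞, one has ‖f·h‖_{C^α(D)} ≤ C ‖h‖_{∘C^α(D)} ‖f‖_{C^α(D)}. -/
open Set
open scoped ENNReal NNReal

noncomputable section

/-- The plane `ℝ²` with the Euclidean norm. -/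
abbrev R2 := EuclideanSpace ℝ (Fin 2)

/-- The scale-invariant Hölder norm `‖f‖_{∘C^α(D)}` (with value in `ℝ≥0∞`):
`sup_D |f| + sup_{x ≠ x'} | |x|^α f(x) - |x'|^α f(x') | / |x - x'|^α`. -/
def ringNorm (α : ℝ) (D : Set R2) (f : R2 → ℝ) : ℝ≥0∞ :=
  (⨆ x : D, (‖f (x : R2)‖₊ : ℝ≥0∞)) +
    ⨆ p : {q : D × D // (q.1 : R2) ≠ (q.2 : R2)},
      (‖(‖(p.1.1 : R2)‖ ^ α) * f (p.1.1 : R2) - (‖(p.1.2 : R2)‖ ^ α) * f (p.1.2 : R2)‖₊ : ℝ≥0∞) /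
        ENNReal.ofReal (‖(p.1.1 : R2) - (p.1.2 : R2)‖ ^ α)

/-- The uniform Hölder norm `‖f‖_{C^α(D)}` (with value in `ℝ≥0∞`):
`sup_D |f| + sup_{x ≠ y} |f(x) - f(y)| / |x - y|^α`. -/
def unifNorm (α : ℝ) (D : Set R2) (f : R2 → ℝ) : ℝ≥0∞ :=
  (⨆ x : D, (‖f (x : R2)‖₊ : ℝ≥0∞)) +
    ⨆ p : {q : D × D // (q.1 : R2) ≠ (q.2 : R2)},
      (‖f (p.1.1 : R2) - f (p.1.2 : R2)‖₊ : ℝ≥0∞) /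
        ENNReal.ofReal (‖(p.1.1 : R2) - (p.1.2 : R2)‖ ^ α)

lemma real_rpow_add_le {a b α : ℝ} (ha : 0 ≤ a) (hb : 0 ≤ b) (hα0 : 0 ≤ α) (hα1 : α ≤ 1) :
    (a + b) ^ α ≤ a ^ α + b ^ α := by
  have h := NNReal.rpow_add_le_add_rpow a.toNNReal b.toNNReal hα0 hα1
  have := NNReal.coe_le_coe.2 h
  simpa [NNReal.coe_rpow, Real.coe_toNNReal a ha, Real.coe_toNNReal b hb] using this

lemma abs_rpow_sub_rpow {a b α : ℝ} (ha : 0 ≤ a) (hb : 0 ≤ b) (hα0 : 0 ≤ α) (hα1 : α ≤ 1) :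
    |a ^ α - b ^ α| ≤ |a - b| ^ α := by
  have key : ∀ x y : ℝ, 0 ≤ x → 0 ≤ y → y ≤ x → x ^ α - y ^ α ≤ (x - y) ^ α := by
    intro x y hx hy hyx
    have h := real_rpow_add_le (a := x - y) (b := y) (by linarith) hy hα0 hα1
    rw [sub_add_cancel] at h
    linarith
  rcases le_total b a with hba | hab
  · rw [abs_of_nonneg (by linarith [Real.rpow_le_rpow hb hba hα0] : (0:ℝ) ≤ a ^ α - b ^ α),
      abs_of_nonneg (by linarith : (0:ℝ) ≤ a - b)]
    exact key a b ha hb hba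
  · rw [abs_sub_comm, abs_sub_comm a b,
      abs_of_nonneg (by linarith [Real.rpow_le_rpow ha hab hα0] : (0:ℝ) ≤ b ^ α - a ^ α),
      abs_of_nonneg (by linarith : (0:ℝ) ≤ b - a)]
    exact key b a hb ha hab

/-- **Product rule for scale-invariant Hölder spaces (Lemma 2.3).** For `0 < α ≤ 1` there is
`C = C(α) > 0` such that for every `D ⊆ ℝ²` containing the origin, every `f ∈ C^α(D)` with
`f(0) = 0`, and every `h ∈ ∘C^α(D)`, one has `‖f·h‖_{C^α} ≤ C ‖h‖_{∘C^α} ‖f‖_{C^α}`. -/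
theorem ring_holder_product_rule (α : ℝ) (hα0 : 0 < α) (hα1 : α ≤ 1) :
    ∃ C : ℝ, 0 < C ∧
      ∀ (D : Set R2), (0 : R2) ∈ D →
      ∀ f h : R2 → ℝ, f 0 = 0 →
      unifNorm α D f < ⊤ → ringNorm α D h < ⊤ →
      unifNorm α D (fun x => f x * h x) ≤
        ENNReal.ofReal C * ringNorm α D h * unifNorm α D f := by

  refine ⟨4, by norm_num, ?_⟩
  intro D hD f h hf0 hF hH
  set F : ℝ := (unifNorm α D f).toReal with hFdef
  set H : ℝ := (ringNorm α D h).toReal with hHdef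
  have hF0 : 0 ≤ F := ENNReal.toReal_nonneg
  have hH0 : 0 ≤ H := ENNReal.toReal_nonneg
  -- sup bounds
  have hfsup : ∀ x ∈ D, |f x| ≤ F := by
    intro x hx
    have h1 : (‖f x‖₊ : ℝ≥0∞) ≤ unifNorm α D f :=
      le_trans (le_iSup (fun x : D => (‖f (x : R2)‖₊ : ℝ≥0∞)) ⟨x, hx⟩) le_self_add
    have := ENNReal.toReal_mono hF.ne h1
    simpa [Real.norm_eq_abs] using this
  have hhsup : ∀ x ∈ D, |h x| ≤ H := by
    intro x hx
    have h1 : (‖h x‖₊ : ℝ≥0∞) ≤ ringNorm α D h :=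
      le_trans (le_iSup (fun x : D => (‖h (x : R2)‖₊ : ℝ≥0∞)) ⟨x, hx⟩) le_self_add
    have := ENNReal.toReal_mono hH.ne h1
    simpa [Real.norm_eq_abs] using this
  -- positivity of denominator
  have hden : ∀ x y : R2, x ≠ y → 0 < ‖x - y‖ ^ α := by
    intro x y hxy
    exact Real.rpow_pos_of_pos (by rwa [norm_sub_pos_iff]) α
  -- Hölder seminorm bound for f
  have hfhol : ∀ x ∈ D, ∀ y ∈ D, |f x - f y| ≤ F * ‖x - y‖ ^ α := by
    intro x hx y hy
    rcases eq_or_ne x y with rfl | hxy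
    · simp [Real.zero_rpow hα0.ne', mul_nonneg hF0 (Real.rpow_nonneg (norm_nonneg _) α)]
    have h1 : (‖f x - f y‖₊ : ℝ≥0∞) / ENNReal.ofReal (‖x - y‖ ^ α) ≤ unifNorm α D f := by
      refine le_trans ?_ le_add_self
      exact le_iSup (fun p : {q : D × D // (q.1 : R2) ≠ (q.2 : R2)} =>
        (‖f (p.1.1 : R2) - f (p.1.2 : R2)‖₊ : ℝ≥0∞) /
          ENNReal.ofReal (‖(p.1.1 : R2) - (p.1.2 : R2)‖ ^ α)) ⟨(⟨x, hx⟩, ⟨y, hy⟩), hxy⟩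
    have hb0 : ENNReal.ofReal (‖x - y‖ ^ α) ≠ 0 := by
      simp [ENNReal.ofReal_eq_zero, not_le, hden x y hxy]
    have h2 : (‖f x - f y‖₊ : ℝ≥0∞) ≤ unifNorm α D f * ENNReal.ofReal (‖x - y‖ ^ α) :=
      (ENNReal.div_le_iff_le_mul (Or.inl hb0) (Or.inl ENNReal.ofReal_ne_top)).1 h1
    have h3 := ENNReal.toReal_mono (by finiteness) h2
    rw [ENNReal.toReal_mul, ENNReal.toReal_ofReal (Real.rpow_nonneg (norm_nonneg _) α)] at h3
    simpa [Real.norm_eq_abs] using h3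
  -- ring seminorm bound for h
  have hhring : ∀ x ∈ D, ∀ y ∈ D,
      |‖x‖ ^ α * h x - ‖y‖ ^ α * h y| ≤ H * ‖x - y‖ ^ α := by
    intro x hx y hy
    rcases eq_or_ne x y with rfl | hxy
    · simp [Real.zero_rpow hα0.ne', mul_nonneg hH0 (Real.rpow_nonneg (norm_nonneg _) α)]
    have h1 : (‖‖x‖ ^ α * h x - ‖y‖ ^ α * h y‖₊ : ℝ≥0∞) / ENNReal.ofReal (‖x - y‖ ^ α) ≤
        ringNorm α D h := by
      refine le_trans ?_ le_add_self
      exact le_iSup (fun p : {q : D × D // (q.1 : R2) ≠ (q.2 : R2)} =>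
        (‖(‖(p.1.1 : R2)‖ ^ α) * h (p.1.1 : R2) - (‖(p.1.2 : R2)‖ ^ α) * h (p.1.2 : R2)‖₊ : ℝ≥0∞) /
          ENNReal.ofReal (‖(p.1.1 : R2) - (p.1.2 : R2)‖ ^ α)) ⟨(⟨x, hx⟩, ⟨y, hy⟩), hxy⟩
    have hb0 : ENNReal.ofReal (‖x - y‖ ^ α) ≠ 0 := by
      simp [ENNReal.ofReal_eq_zero, not_le, hden x y hxy]
    have h2 := (ENNReal.div_le_iff_le_mul (Or.inl hb0) (Or.inl ENNReal.ofReal_ne_top)).1 h1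
    have h3 := ENNReal.toReal_mono (by finiteness) h2
    rw [ENNReal.toReal_mul, ENNReal.toReal_ofReal (Real.rpow_nonneg (norm_nonneg _) α)] at h3
    simpa [Real.norm_eq_abs] using h3
  -- pointwise bound |f x| ≤ F * ‖x‖^α
  have hfx : ∀ x ∈ D, |f x| ≤ F * ‖x‖ ^ α := by
    intro x hx
    have := hfhol x hx 0 hD
    simpa [hf0] using this
  -- key pointwise product bound
  have key : ∀ x ∈ D, ∀ y ∈ D, |f x * h x - f y * h y| ≤ 3 * H * F * ‖x - y‖ ^ α := by
    intro x hx y hy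
    set d : ℝ := ‖x - y‖ ^ α with hd
    have hd0 : 0 ≤ d := Real.rpow_nonneg (norm_nonneg _) α
    have hrx : (0:ℝ) ≤ ‖x‖ ^ α := Real.rpow_nonneg (norm_nonneg _) α
    -- |‖y‖^α - ‖x‖^α| ≤ d
    have hnn : |‖y‖ ^ α - ‖x‖ ^ α| ≤ d := by
      refine le_trans (abs_rpow_sub_rpow (norm_nonneg y) (norm_nonneg x) hα0.le hα1) ?_
      rw [hd, norm_sub_rev]
      exact Real.rpow_le_rpow (abs_nonneg _) (abs_norm_sub_norm_le y x) hα0.le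
    -- ‖x‖^α * |h x - h y| ≤ 2 H d
    have hkey : ‖x‖ ^ α * |h x - h y| ≤ 2 * H * d := by
      have e : ‖x‖ ^ α * (h x - h y) =
          (‖x‖ ^ α * h x - ‖y‖ ^ α * h y) + (‖y‖ ^ α - ‖x‖ ^ α) * h y := by ring
      calc ‖x‖ ^ α * |h x - h y| = |‖x‖ ^ α * (h x - h y)| := by
            rw [abs_mul, abs_of_nonneg hrx]
        _ ≤ |‖x‖ ^ α * h x - ‖y‖ ^ α * h y| + |(‖y‖ ^ α - ‖x‖ ^ α) * h y| := by
            rw [e]; exact abs_add_le _ _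
        _ ≤ H * d + d * H := by
            gcongr
            · exact hhring x hx y hy
            · rw [abs_mul]
              exact mul_le_mul hnn (hhsup y hy) (abs_nonneg _) hd0
        _ = 2 * H * d := by ring
    have e1 : f x * h x - f y * h y = f x * (h x - h y) + (f x - f y) * h y := by ring
    calc |f x * h x - f y * h y| ≤ |f x * (h x - h y)| + |(f x - f y) * h y| := by
          rw [e1]; exact abs_add_le _ _
      _ = |f x| * |h x - h y| + |f x - f y| * |h y| := by rw [abs_mul, abs_mul]
      _ ≤ (F * ‖x‖ ^ α) * |h x - h y| + (F * d) * H := by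
          gcongr
          · exact hfx x hx
          · exact hfhol x hx y hy
          · exact hhsup y hy
      _ ≤ F * (2 * H * d) + F * d * H := by
          rw [mul_assoc]
          gcongr
      _ = 3 * H * F * d := by ring
  -- assemble
  have hNR : ringNorm α D h = ENNReal.ofReal H := (ENNReal.ofReal_toReal hH.ne).symm
  have hMR : unifNorm α D f = ENNReal.ofReal F := (ENNReal.ofReal_toReal hF.ne).symm
  have hRHS : ENNReal.ofReal (4:ℝ) * ringNorm α D h * unifNorm α D f =
      ENNReal.ofReal (4 * H * F) := by
    rw [hNR, hMR, ← ENNReal.ofReal_mul (by norm_num), ← ENNReal.ofReal_mul (by positivity)]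
  rw [hRHS, unifNorm]
  have hS1 : (⨆ x : D, (‖f (x : R2) * h (x : R2)‖₊ : ℝ≥0∞)) ≤ ENNReal.ofReal (H * F) := by
    refine iSup_le fun x => ?_
    rw [← enorm_eq_nnnorm, ← ofReal_norm]
    refine ENNReal.ofReal_le_ofReal ?_
    rw [Real.norm_eq_abs, abs_mul]
    calc |f (x : R2)| * |h (x : R2)| ≤ F * H :=
          mul_le_mul (hfsup _ x.2) (hhsup _ x.2) (abs_nonneg _) hF0
      _ = H * F := by ring
  have hS2 : (⨆ p : {q : D × D // (q.1 : R2) ≠ (q.2 : R2)},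
      (‖f (p.1.1 : R2) * h (p.1.1 : R2) - f (p.1.2 : R2) * h (p.1.2 : R2)‖₊ : ℝ≥0∞) /
        ENNReal.ofReal (‖(p.1.1 : R2) - (p.1.2 : R2)‖ ^ α)) ≤ ENNReal.ofReal (3 * H * F) := by
    refine iSup_le fun p => ?_
    refine ENNReal.div_le_of_le_mul ?_
    rw [← enorm_eq_nnnorm, ← ofReal_norm, ← ENNReal.ofReal_mul (by positivity)]
    refine ENNReal.ofReal_le_ofReal ?_
    rw [Real.norm_eq_abs]
    exact key _ p.1.1.2 _ p.1.2.2
  calc _ ≤ ENNReal.ofReal (H * F) + ENNReal.ofReal (3 * H * F) := add_le_add hS1 hS2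
    _ = ENNReal.ofReal (4 * H * F) := by
        rw [← ENNReal.ofReal_add (by positivity) (by positivity)]
        ring_nf
end
end

section
/- Liouville-type uniqueness for the Dirichlet problem on a sector: Let 0 < β < 1/2. Suppose Ψ : Ω̄_β → ℝ is continuous on Ω̄_β, twice continuously differentiable on Ω_β, harmonic on Ω_β (i.e. ∂_{x₁x₁}Ψ + ∂_{x₂x₂}Ψ = 0), vanishes on ∂Ω_β, and satisfies the growth bound |Ψ(x)| ≤ C |x|² ln(e + |x|) for some constant C and all x ∈ Ω_β. Then Ψ ≡ 0. -/
open Set Complex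
open scoped ENNReal NNReal Real

open Filter
open scoped Topology

set_option maxHeartbeats 1000000

noncomputable section

/-- The open sector `Ω_β = { r e^{iθ} : r > 0, 0 < θ < βπ }` in `ℂ ≅ ℝ²`. -/
def Sector (β : ℝ) : Set ℂ := {z | z ≠ 0 ∧ 0 < Complex.arg z ∧ Complex.arg z < β * π}

/-- The Laplacian `ΔΨ = ∂_{x₁x₁}Ψ + ∂_{x₂x₂}Ψ` of a function `Ψ : ℂ → ℝ`. -/
def lap (Ψ : ℂ → ℝ) (z : ℂ) : ℝ :=
  fderiv ℝ (fun w => fderiv ℝ Ψ w 1) z 1 +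
    fderiv ℝ (fun w => fderiv ℝ Ψ w Complex.I) z Complex.I

lemma fderiv_re_comp {f : ℂ → ℂ} {f' : ℂ} {w : ℂ} (hf : HasDerivAt f f' w) (u : ℂ) :
    fderiv ℝ (fun x => (f x).re) w u = (f' * u).re := by
  have h1 : HasFDerivAt (fun x => (f x).re)
      (Complex.reCLM.comp (ContinuousLinearMap.restrictScalars ℝ
        (ContinuousLinearMap.smulRight (1 : ℂ →L[ℂ] ℂ) f'))) w :=
    Complex.reCLM.hasFDerivAt.comp w ((hf.hasFDerivAt).restrictScalars ℝ)
  rw [h1.fderiv]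
  simp [mul_comm]

lemma lap_neg (f : ℂ → ℝ) (z : ℂ) : lap (fun w => -f w) z = -(lap f z) := by
  unfold lap
  have h1 : ∀ u : ℂ, (fun w => fderiv ℝ (fun x => -f x) w u) = fun w => -(fderiv ℝ f w u) := by
    intro u; funext w; rw [fderiv_fun_neg]; simp
  rw [h1 1, h1 Complex.I]
  rw [fderiv_fun_neg, fderiv_fun_neg]
  simp
  ring

lemma secondDerivTest {h : ℂ → ℝ} {z₀ : ℂ} (v : ℂ) (hh : ContDiffAt ℝ 2 h z₀)
    (hmax : IsLocalMax h z₀) : fderiv ℝ (fun w => fderiv ℝ h w v) z₀ v ≤ 0 := by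
  by_contra hA'
  push_neg at hA'
  set F : ℂ → ℝ := fun w => fderiv ℝ h w v with hF
  set L : ℝ → ℂ := fun t => z₀ + t • v with hLdef
  have hL0 : L 0 = z₀ := by simp [hLdef]
  have hLd : ∀ t : ℝ, HasDerivAt L v t := by
    intro t
    simpa [hLdef] using ((hasDerivAt_id t).smul_const v).const_add z₀
  have hLc : Continuous L := by fun_prop
  have hev : ∀ᶠ w in 𝓝 z₀, ContDiffAt ℝ 2 h w := hh.eventually (by norm_num)
  have hevd : ∀ᶠ w in 𝓝 z₀, DifferentiableAt ℝ h w :=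
    hev.mono fun w hw => hw.differentiableAt two_ne_zero
  have hFd : DifferentiableAt ℝ F z₀ := by
    have h1 : ContDiffAt ℝ 1 (fderiv ℝ h) z₀ := hh.fderiv_right (by norm_num)
    exact (h1.differentiableAt one_ne_zero).clm_apply (differentiableAt_const v)
  set A := fderiv ℝ F z₀ v with hAdef
  have hψ : HasDerivAt (fun t => F (L t)) A 0 := by
    have h2 : HasFDerivAt F (fderiv ℝ F z₀) (L 0) := by rw [hL0]; exact hFd.hasFDerivAt
    exact h2.comp_hasDerivAt 0 (hLd 0)
  have hφmax : IsLocalMax (fun t => h (L t)) 0 := by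
    have ht : Tendsto L (𝓝 (0:ℝ)) (𝓝 z₀) := by
      have := hLc.tendsto 0
      rwa [hL0] at this
    have h2 := ht.eventually hmax
    have h3 : h (L 0) = h z₀ := by rw [hL0]
    unfold IsLocalMax IsMaxFilter
    simpa [h3] using h2
  have hφd0 : HasDerivAt (fun t => h (L t)) (F z₀) 0 := by
    have hd0 : HasFDerivAt h (fderiv ℝ h z₀) (L 0) := by
      rw [hL0]; exact (hevd.self_of_nhds).hasFDerivAt
    exact hd0.comp_hasDerivAt 0 (hLd 0)
  have hψ0 : F z₀ = 0 := hφmax.hasDerivAt_eq_zero hφd0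
  -- eventually differentiable along the line
  have hevL : ∀ᶠ t in 𝓝 (0:ℝ), DifferentiableAt ℝ h (L t) := by
    have := (hLc.tendsto 0).eventually (by rw [hL0]; exact hevd)
    exact this
  have hφd' : ∀ᶠ t in 𝓝 (0:ℝ), HasDerivAt (fun s => h (L s)) (F (L t)) t :=
    hevL.mono fun t ht => ht.hasFDerivAt.comp_hasDerivAt t (hLd t)
  -- positivity of F ∘ L on the right
  have hslope : Tendsto (slope (fun t => F (L t)) 0) (𝓝[≠] 0) (𝓝 A) :=
    hasDerivAt_iff_tendsto_slope.mp hψ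
  have hpos : ∀ᶠ t in 𝓝 (0:ℝ), t ∈ Ioi (0:ℝ) → 0 < F (L t) := by
    have h1 : ∀ᶠ t in 𝓝[≠] (0:ℝ), 0 < slope (fun t => F (L t)) 0 t :=
      hslope.eventually (eventually_gt_nhds hA')
    rw [eventually_nhdsWithin_iff] at h1
    filter_upwards [h1] with t h1t ht
    have hne : t ∈ ({(0:ℝ)}ᶜ : Set ℝ) := by simp [ne_of_gt (mem_Ioi.mp ht)]
    have h2 := h1t hne
    rw [slope_def_field] at h2
    have h3 : (F (L t) - F (L 0)) / (t - 0) = F (L t) / t := by rw [hL0, hψ0]; ring_nf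
    rw [h3] at h2
    have := mul_pos h2 ht
    rwa [div_mul_cancel₀ _ (ne_of_gt ht)] at this
  -- local max eventual inequality
  have hmaxev : ∀ᶠ t in 𝓝 (0:ℝ), h (L t) ≤ h (L 0) := hφmax.mono (by simp [hL0])
  obtain ⟨ε, hε, hball⟩ := Metric.eventually_nhds_iff.mp (hφd'.and (hpos.and hmaxev))
  set t₀ : ℝ := ε / 2 with ht₀
  have ht₀pos : 0 < t₀ := by positivity
  have hmem : ∀ x ∈ Icc (0:ℝ) t₀, dist x (0:ℝ) < ε := by
    intro x hx
    rw [Real.dist_eq, sub_zero, _root_.abs_of_nonneg hx.1]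
    calc x ≤ t₀ := hx.2
    _ < ε := by rw [ht₀]; linarith
  have hsm : StrictMonoOn (fun s => h (L s)) (Icc 0 t₀) := by
    apply strictMonoOn_of_deriv_pos (convex_Icc _ _)
    · intro x hx
      exact ((hball (hmem x hx)).1.continuousAt).continuousWithinAt
    · intro x hx
      rw [interior_Icc] at hx
      have hb := hball (hmem x ⟨hx.1.le, hx.2.le⟩)
      rw [hb.1.deriv]
      exact hb.2.1 hx.1
  have hlt : h (L 0) < h (L t₀) :=
    hsm (left_mem_Icc.mpr ht₀pos.le) (right_mem_Icc.mpr ht₀pos.le) ht₀pos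
  have hdist : dist t₀ (0:ℝ) < ε := by
    rw [Real.dist_eq, sub_zero, _root_.abs_of_nonneg ht₀pos.le]; linarith
  have hle : h (L t₀) ≤ h (L 0) := (hball hdist).2.2
  linarith

lemma fderiv2_add {f g : ℂ → ℝ} {z : ℂ} (hf : ContDiffAt ℝ 2 f z) (hg : ContDiffAt ℝ 2 g z)
    (u : ℂ) :
    fderiv ℝ (fun w => fderiv ℝ (fun x => f x + g x) w u) z u =
      fderiv ℝ (fun w => fderiv ℝ f w u) z u + fderiv ℝ (fun w => fderiv ℝ g w u) z u := by
  have hfd : ∀ᶠ w in 𝓝 z, DifferentiableAt ℝ f w :=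
    (hf.eventually (by norm_num)).mono fun w hw => hw.differentiableAt two_ne_zero
  have hgd : ∀ᶠ w in 𝓝 z, DifferentiableAt ℝ g w :=
    (hg.eventually (by norm_num)).mono fun w hw => hw.differentiableAt two_ne_zero
  have h1 : (fun w => fderiv ℝ (fun x => f x + g x) w u)
      =ᶠ[𝓝 z] fun w => fderiv ℝ f w u + fderiv ℝ g w u := by
    filter_upwards [hfd, hgd] with w hfw hgw
    rw [fderiv_fun_add hfw hgw]; simp
  have hf1 : DifferentiableAt ℝ (fun w => fderiv ℝ f w u) z :=
    ((hf.fderiv_right (by norm_num : (1:WithTop ℕ∞) + 1 ≤ 2)).differentiableAt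
      one_ne_zero).clm_apply (differentiableAt_const u)
  have hg1 : DifferentiableAt ℝ (fun w => fderiv ℝ g w u) z :=
    ((hg.fderiv_right (by norm_num : (1:WithTop ℕ∞) + 1 ≤ 2)).differentiableAt
      one_ne_zero).clm_apply (differentiableAt_const u)
  rw [h1.fderiv_eq, fderiv_fun_add hf1 hg1]
  simp

lemma lap_add {f g : ℂ → ℝ} {z : ℂ} (hf : ContDiffAt ℝ 2 f z) (hg : ContDiffAt ℝ 2 g z) :
    lap (fun w => f w + g w) z = lap f z + lap g z := by
  unfold lap
  rw [fderiv2_add hf hg 1, fderiv2_add hf hg Complex.I]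
  ring

lemma fderiv2_const_mul {f : ℂ → ℝ} {z : ℂ} (hf : ContDiffAt ℝ 2 f z) (c : ℝ) (u : ℂ) :
    fderiv ℝ (fun w => fderiv ℝ (fun x => c * f x) w u) z u =
      c * fderiv ℝ (fun w => fderiv ℝ f w u) z u := by
  have hfd : ∀ᶠ w in 𝓝 z, DifferentiableAt ℝ f w :=
    (hf.eventually (by norm_num)).mono fun w hw => hw.differentiableAt two_ne_zero
  have h1 : (fun w => fderiv ℝ (fun x => c * f x) w u)
      =ᶠ[𝓝 z] fun w => c * fderiv ℝ f w u := by
    filter_upwards [hfd] with w hfw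
    rw [fderiv_const_mul hfw]; simp
  have hf1 : DifferentiableAt ℝ (fun w => fderiv ℝ f w u) z :=
    ((hf.fderiv_right (by norm_num : (1:WithTop ℕ∞) + 1 ≤ 2)).differentiableAt
      one_ne_zero).clm_apply (differentiableAt_const u)
  rw [h1.fderiv_eq, fderiv_const_mul hf1]
  simp

lemma lap_const_mul {f : ℂ → ℝ} {z : ℂ} (hf : ContDiffAt ℝ 2 f z) (c : ℝ) :
    lap (fun w => c * f w) z = c * lap f z := by
  unfold lap
  rw [fderiv2_const_mul hf c 1, fderiv2_const_mul hf c Complex.I]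
  ring

lemma lap_q (z : ℂ) : lap (fun w : ℂ => w.re ^ 2 + w.im ^ 2) z = 4 := by
  have hq : ∀ w : ℂ, HasFDerivAt (fun x : ℂ => x.re ^ 2 + x.im ^ 2)
      (((2 * w.re) • Complex.reCLM) + ((2 * w.im) • Complex.imCLM)) w := by
    intro w
    have h1 : HasFDerivAt (fun x : ℂ => x.re ^ 2) ((2 * w.re) • Complex.reCLM) w := by
      have hm := (Complex.reCLM.hasFDerivAt (x := w)).mul (Complex.reCLM.hasFDerivAt (x := w))
      have he : (fun x : ℂ => x.re ^ 2) = fun x : ℂ => x.re * x.re := by funext x; ring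
      rw [he, two_mul, add_smul]
      simp at hm; exact hm
    have h2 : HasFDerivAt (fun x : ℂ => x.im ^ 2) ((2 * w.im) • Complex.imCLM) w := by
      have hm := (Complex.imCLM.hasFDerivAt (x := w)).mul (Complex.imCLM.hasFDerivAt (x := w))
      have he : (fun x : ℂ => x.im ^ 2) = fun x : ℂ => x.im * x.im := by funext x; ring
      rw [he, two_mul, add_smul]
      simp at hm; exact hm
    exact h1.add h2
  have e1 : (fun w : ℂ => fderiv ℝ (fun x : ℂ => x.re ^ 2 + x.im ^ 2) w 1)
      = fun w : ℂ => 2 * w.re := by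
    funext w
    rw [(hq w).fderiv]
    simp
  have e2 : (fun w : ℂ => fderiv ℝ (fun x : ℂ => x.re ^ 2 + x.im ^ 2) w Complex.I)
      = fun w : ℂ => 2 * w.im := by
    funext w
    rw [(hq w).fderiv]
    simp
  unfold lap
  rw [e1, e2]
  have d1 : HasFDerivAt (fun w : ℂ => 2 * w.re) ((2:ℝ) • Complex.reCLM) z := by
    simpa using Complex.reCLM.hasFDerivAt.const_mul (2:ℝ)
  have d2 : HasFDerivAt (fun w : ℂ => 2 * w.im) ((2:ℝ) • Complex.imCLM) z := by
    simpa using Complex.imCLM.hasFDerivAt.const_mul (2:ℝ)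
  rw [d1.fderiv, d2.fderiv]
  norm_num

lemma maxp {V : Set ℂ} (hVo : IsOpen V) (hVb : Bornology.IsBounded V) {h : ℂ → ℝ} {M : ℝ}
    (hc : ContinuousOn h (closure V)) (hd : ∀ z ∈ V, ContDiffAt ℝ 2 h z)
    (hl : ∀ z ∈ V, lap h z = 0) (hbd : ∀ z ∈ closure V \ V, h z ≤ M) :
    ∀ z ∈ V, h z ≤ M := by
  intro z hz
  obtain ⟨r, hr⟩ := hVb.subset_closedBall 0
  have hr0 : 0 ≤ r := by
    have := hr hz
    rw [Metric.mem_closedBall] at this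
    exact le_trans dist_nonneg this
  suffices H : ∀ δ > (0:ℝ), h z ≤ M + δ * r ^ 2 by
    by_contra hzM
    push_neg at hzM
    have hHδ := H ((h z - M) / (2 * (r ^ 2 + 1)))
      (div_pos (by linarith) (by positivity))
    have hrr : (0:ℝ) ≤ r ^ 2 := sq_nonneg r
    have key : (h z - M) / (2 * (r ^ 2 + 1)) * r ^ 2 < h z - M := by
      rw [div_mul_eq_mul_div, div_lt_iff₀ (by positivity)]
      nlinarith
    linarith
  intro δ hδ
  set g : ℂ → ℝ := fun w => h w + δ * (w.re ^ 2 + w.im ^ 2) with hgdef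
  have hKc : IsCompact (closure V) :=
    Metric.isCompact_of_isClosed_isBounded isClosed_closure hVb.closure
  have hKne : (closure V).Nonempty := ⟨z, subset_closure hz⟩
  have hgc : ContinuousOn g (closure V) :=
    hc.add (Continuous.continuousOn (by fun_prop))
  obtain ⟨z₀, hz₀K, hz₀max⟩ := hKc.exists_isMaxOn hKne hgc
  have hKball : closure V ⊆ Metric.closedBall 0 r :=
    closure_minimal hr Metric.isClosed_closedBall
  by_cases hz₀V : z₀ ∈ V
  · exfalso
    have hloc : IsLocalMax g z₀ := by
      filter_upwards [hVo.mem_nhds hz₀V] with w hw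
      exact hz₀max (subset_closure hw)
    have hqC : ContDiff ℝ 2 (fun w : ℂ => w.re ^ 2 + w.im ^ 2) :=
      ((Complex.reCLM.contDiff).pow 2).add ((Complex.imCLM.contDiff).pow 2)
    have hqsmooth : ContDiffAt ℝ 2 (fun w : ℂ => δ * (w.re ^ 2 + w.im ^ 2)) z₀ :=
      (contDiff_const.mul hqC).contDiffAt
    have hgd : ContDiffAt ℝ 2 g z₀ := (hd z₀ hz₀V).add hqsmooth
    have h1 : lap g z₀ = lap h z₀ + δ * lap (fun w : ℂ => w.re ^ 2 + w.im ^ 2) z₀ := by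
      rw [hgdef]
      rw [lap_add (hd z₀ hz₀V) hqsmooth,
        lap_const_mul hqC.contDiffAt δ]
    have h2 : lap g z₀ = 4 * δ := by rw [h1, hl z₀ hz₀V, lap_q]; ring
    have h3 : lap g z₀ ≤ 0 :=
      add_nonpos (secondDerivTest 1 hgd hloc) (secondDerivTest Complex.I hgd hloc)
    linarith
  · have hzb := hbd z₀ ⟨hz₀K, hz₀V⟩
    have hq₀ : z₀.re ^ 2 + z₀.im ^ 2 ≤ r ^ 2 := by
      have h4 : ‖z₀‖ ≤ r := by
        have := hKball hz₀K
        rwa [Metric.mem_closedBall, dist_zero_right] at this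
      have h5 : ‖z₀‖ ^ 2 = z₀.re ^ 2 + z₀.im ^ 2 := by
        rw [Complex.sq_norm, Complex.normSq_apply]; ring
      nlinarith [norm_nonneg z₀]
    have h6 : g z ≤ g z₀ := hz₀max (subset_closure hz)
    have h7 : 0 ≤ δ * (z.re ^ 2 + z.im ^ 2) := by positivity
    have h8 : δ * (z₀.re ^ 2 + z₀.im ^ 2) ≤ δ * r ^ 2 :=
      mul_le_mul_of_nonneg_left hq₀ hδ.le
    simp only [hgdef] at h6
    linarith

lemma lap_re_holo {g : ℂ → ℂ} {U : Set ℂ} (hU : IsOpen U) (hg : DifferentiableOn ℂ g U)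
    {z : ℂ} (hz : z ∈ U) : lap (fun w => (g w).re) z = 0 := by
  have hmem : U ∈ 𝓝 z := hU.mem_nhds hz
  have hga : ∀ w ∈ U, AnalyticAt ℂ g w := fun w hw => hg.analyticAt (hU.mem_nhds hw)
  have hgd : ∀ᶠ w in 𝓝 z, HasDerivAt g (deriv g w) w :=
    eventually_of_mem hmem fun w hw => ((hga w hw).differentiableAt).hasDerivAt
  have hg1d : DifferentiableAt ℂ (deriv g) z := by
    have h2 : AnalyticAt ℂ (fderiv ℂ g) z := (hga z hz).fderiv
    exact (h2.differentiableAt).clm_apply (differentiableAt_const 1)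
  set d2 : ℂ := deriv (deriv g) z with hd2
  have hgd1 : HasDerivAt (deriv g) d2 z := hg1d.hasDerivAt
  have E1 : (fun w => fderiv ℝ (fun x => (g x).re) w 1)
      =ᶠ[𝓝 z] fun w => (deriv g w * 1).re :=
    hgd.mono fun w hw => fderiv_re_comp hw 1
  have E2 : (fun w => fderiv ℝ (fun x => (g x).re) w Complex.I)
      =ᶠ[𝓝 z] fun w => (deriv g w * Complex.I).re :=
    hgd.mono fun w hw => fderiv_re_comp hw Complex.I
  unfold lap
  rw [E1.fderiv_eq, E2.fderiv_eq]
  rw [fderiv_re_comp (hgd1.mul_const 1) 1, fderiv_re_comp (hgd1.mul_const Complex.I) Complex.I]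
  have : d2 * Complex.I * Complex.I = -d2 := by
    rw [mul_assoc, Complex.I_mul_I, mul_neg_one]
  rw [this]
  simp

lemma sector_mem_re_pos {β : ℝ} (hβ : β ≤ 1/2) {z : ℂ} (hz : z ∈ Sector β) : 0 < z.re := by
  obtain ⟨h0, h1, h2⟩ := hz
  have hπ := Real.pi_pos
  have hπ2 : β * π ≤ π / 2 := by nlinarith
  have habs : |z.arg| < π / 2 := by
    rw [_root_.abs_of_pos h1]; linarith
  rcases Complex.abs_arg_lt_pi_div_two_iff.mp habs with h | h
  · exact h
  · exact absurd h h0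

lemma sector_mem_im_pos {β : ℝ} (hβ : β ≤ 1/2) {z : ℂ} (hz : z ∈ Sector β) : 0 < z.im := by
  obtain ⟨h0, h1, h2⟩ := hz
  have hπ := Real.pi_pos
  have harg : z.arg < π := by nlinarith
  have hsin : 0 < Real.sin z.arg := Real.sin_pos_of_pos_of_lt_pi h1 harg
  have habs : 0 < ‖z‖ := norm_pos_iff.mpr h0
  have := Complex.norm_mul_sin_arg z
  nlinarith

lemma sector_open {β : ℝ} (hβ : β ≤ 1/2) : IsOpen (Sector β) := by
  rw [isOpen_iff_mem_nhds]
  intro z hz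
  have hre := sector_mem_re_pos hβ hz
  have hc : ContinuousAt Complex.arg z :=
    Complex.continuousAt_arg (Complex.mem_slitPlane_iff.mpr (Or.inl hre))
  have h1 : ∀ᶠ w : ℂ in 𝓝 z, 0 < w.re :=
    eventually_of_mem ((isOpen_lt continuous_const Complex.continuous_re).mem_nhds hre)
      fun w hw => hw
  have h2 : ∀ᶠ w : ℂ in 𝓝 z, Complex.arg w ∈ Ioo 0 (β * π) :=
    eventually_of_mem (hc.preimage_mem_nhds (isOpen_Ioo.mem_nhds ⟨hz.2.1, hz.2.2⟩))
      fun w hw => hw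
  filter_upwards [h1, h2] with w hw1 hw2
  refine ⟨fun h => by rw [h] at hw1; simp at hw1, hw2.1, hw2.2⟩

lemma sector_closure_arg {β : ℝ} (hβ : β ≤ 1/2) {z : ℂ} (hz : z ∈ closure (Sector β))
    (h0 : z ≠ 0) : (0 < z.re ∨ z.im ≠ 0) ∧ 0 ≤ z.arg ∧ z.arg ≤ β * π := by
  have hsub : Sector β ⊆ {w : ℂ | 0 ≤ w.re} ∩ {w : ℂ | 0 ≤ w.im} := fun w hw =>
    ⟨(sector_mem_re_pos hβ hw).le, (sector_mem_im_pos hβ hw).le⟩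
  have hcl : closure (Sector β) ⊆ {w : ℂ | 0 ≤ w.re} ∩ {w : ℂ | 0 ≤ w.im} :=
    closure_minimal hsub (IsClosed.inter (isClosed_le continuous_const Complex.continuous_re)
      (isClosed_le continuous_const Complex.continuous_im))
  obtain ⟨hre, him⟩ := hcl hz
  replace hre : (0:ℝ) ≤ z.re := hre
  replace him : (0:ℝ) ≤ z.im := him
  have hslit : 0 < z.re ∨ z.im ≠ 0 := by
    rcases lt_or_eq_of_le hre with h | h
    · exact Or.inl h
    · right
      intro h'
      exact h0 (Complex.ext h.symm h')
  have hcarg : ContinuousWithinAt Complex.arg (Sector β) z :=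
    (Complex.continuousAt_arg (Complex.mem_slitPlane_iff.mpr hslit)).continuousWithinAt
  have hmem : Complex.arg z ∈ closure (Complex.arg '' Sector β) := hcarg.mem_closure_image hz
  have himg : Complex.arg '' Sector β ⊆ Icc 0 (β * π) := by
    rintro _ ⟨w, hw, rfl⟩
    exact ⟨hw.2.1.le, hw.2.2.le⟩
  have hIcc := (closure_minimal himg isClosed_Icc) hmem
  exact ⟨hslit, hIcc.1, hIcc.2⟩

lemma key (β : ℝ) (hβ0 : 0 < β) (hβ : β < 1/2)
    (Ψ : ℂ → ℝ) (C : ℝ)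
    (hcont : ContinuousOn Ψ (closure (Sector β)))
    (hC2 : ContDiffOn ℝ 2 Ψ (Sector β))
    (hharm : ∀ z ∈ Sector β, lap Ψ z = 0)
    (hbc : ∀ z ∈ frontier (Sector β), Ψ z = 0)
    (hgrowth : ∀ z ∈ Sector β, |Ψ z| ≤ C * ‖z‖ ^ 2 * Real.log (Real.exp 1 + ‖z‖)) :
    ∀ z ∈ Sector β, Ψ z ≤ 0 := by
  intro z₀ hz₀
  have hπ := Real.pi_pos
  set γ : ℝ := β * π with hγdef
  have hγ0 : 0 < γ := mul_pos hβ0 hπ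
  have hγlt : γ < π / 2 := by rw [hγdef]; nlinarith
  have hβinv : 2 < 1 / β := (lt_div_iff₀ hβ0).mpr (by linarith)
  set α : ℝ := (2 + 1 / β) / 2 with hαdef
  have hα2 : 2 < α := by rw [hαdef]; linarith
  have hα0 : 0 < α := by linarith
  have hαβ : α < 1 / β := by rw [hαdef]; linarith
  have hαγ : α * γ < π := by
    have h1 : α * β < 1 := by
      have h := (lt_div_iff₀ hβ0).mp hαβ
      linarith
    calc α * γ = α * β * π := by rw [hγdef]; ring
    _ < 1 * π := by nlinarith
    _ = π := one_mul π
  set c₀ : ℝ := Real.cos (α * γ / 2) with hc₀def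
  have hc₀ : 0 < c₀ := Real.cos_pos_of_mem_Ioo ⟨by nlinarith, by nlinarith⟩
  set cst : ℂ := Complex.exp (-(α * γ / 2 : ℝ) * Complex.I) with hcstdef
  set vb : ℂ → ℝ := fun z => (z ^ (α : ℂ) * cst).re with hvbdef
  -- explicit formula
  have hform : ∀ z : ℂ, z ≠ 0 → vb z = ‖z‖ ^ α * Real.cos (α * z.arg - α * γ / 2) := by
    intro z hz
    rw [hvbdef]
    simp only
    rw [hcstdef, Complex.cpow_def_of_ne_zero hz, ← Complex.exp_add, Complex.exp_re]
    have hre : (Complex.log z * (α : ℂ) + (-(α * γ / 2 : ℝ) : ℂ) * Complex.I).re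
        = Real.log ‖z‖ * α := by
      simp [Complex.add_re, Complex.mul_re, Complex.log_re, Complex.log_im,
        Complex.I_re, Complex.I_im, Complex.ofReal_re, Complex.ofReal_im]
    have him : (Complex.log z * (α : ℂ) + (-(α * γ / 2 : ℝ) : ℂ) * Complex.I).im
        = z.arg * α + -(α * γ / 2) := by
      simp [Complex.add_im, Complex.mul_im, Complex.log_re, Complex.log_im,
        Complex.I_re, Complex.I_im, Complex.ofReal_re, Complex.ofReal_im]
    rw [hre, him]
    rw [Real.rpow_def_of_pos (norm_pos_iff.mpr hz)]
    congr 1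
    ring
  -- lower bound
  have hlow : ∀ z : ℂ, z ≠ 0 → 0 ≤ z.arg → z.arg ≤ γ → c₀ * ‖z‖ ^ α ≤ vb z := by
    intro z hz h1 h2
    rw [hform z hz]
    have hcosb : c₀ ≤ Real.cos (α * z.arg - α * γ / 2) := by
      have habs : |α * z.arg - α * γ / 2| ≤ α * γ / 2 := by
        rw [abs_le]
        constructor
        · nlinarith
        · nlinarith
      have hb := Real.cos_le_cos_of_nonneg_of_le_pi (abs_nonneg _) (by nlinarith) habs
      rwa [Real.cos_abs] at hb
    have hpow : (0:ℝ) ≤ ‖z‖ ^ α := Real.rpow_nonneg (norm_nonneg z) α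
    nlinarith [mul_le_mul_of_nonneg_left hcosb hpow]
  have hvb0 : vb 0 = 0 := by
    rw [hvbdef]
    simp only
    rw [Complex.zero_cpow (by exact_mod_cast hα0.ne' : (α : ℂ) ≠ 0)]
    simp
  have hvbnonneg : ∀ z ∈ closure (Sector β), 0 ≤ vb z := by
    intro z hz
    by_cases h0 : z = 0
    · rw [h0, hvb0]
    · obtain ⟨_, h1, h2⟩ := sector_closure_arg hβ.le hz h0
      have hl2 := hlow z h0 h1 h2
      nlinarith [Real.rpow_nonneg (norm_nonneg z) α]
  have habsvb : ∀ z : ℂ, |vb z| ≤ ‖z‖ ^ α := by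
    intro z
    by_cases h0 : z = 0
    · simp [h0, hvb0, Real.zero_rpow hα0.ne']
    · rw [hvbdef]
      simp only
      have h1 : |(z ^ (α : ℂ) * cst).re| ≤ ‖z ^ (α : ℂ) * cst‖ :=
        Complex.abs_re_le_norm _
      have h2 : ‖z ^ (α : ℂ) * cst‖ = ‖z‖ ^ α := by
        rw [norm_mul, hcstdef, Complex.norm_exp]
        have h3 : ((-(α * γ / 2 : ℝ) : ℂ) * Complex.I).re = 0 := by simp
        rw [h3, Real.exp_zero, mul_one]
        rw [Complex.norm_cpow_of_ne_zero h0]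
        simp
      rw [← h2]
      exact h1
  have hvbcont : ContinuousOn vb (closure (Sector β)) := by
    intro z hz
    by_cases h0 : z = 0
    · rw [h0]
      have ht : Tendsto (fun w : ℂ => ‖w‖ ^ α) (𝓝 (0:ℂ)) (𝓝 0) := by
        have hcont2 : Continuous fun w : ℂ => ‖w‖ ^ α :=
          continuous_norm.rpow_const fun _ => Or.inr hα0.le
        have h4 := hcont2.tendsto 0
        simpa [Real.zero_rpow hα0.ne'] using h4
      unfold ContinuousWithinAt
      rw [hvb0]
      exact squeeze_zero_norm (fun w => by simpa [Real.norm_eq_abs] using habsvb w)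
        (ht.mono_left nhdsWithin_le_nhds)
    · obtain ⟨hslit, _, _⟩ := sector_closure_arg hβ.le hz h0
      have hca : ContinuousAt vb z := by
        have h1 : ContinuousAt (fun w : ℂ => w ^ (α : ℂ) * cst) z :=
          (continuousAt_cpow_const (Complex.mem_slitPlane_iff.mpr hslit)).mul continuousAt_const
        exact (Complex.continuous_re.continuousAt).comp h1
      exact hca.continuousWithinAt
  have hsect_slit : ∀ w ∈ Sector β, w ∈ Complex.slitPlane := fun w hw =>
    Complex.mem_slitPlane_iff.mpr (Or.inl (sector_mem_re_pos hβ.le hw))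
  have hgdiff : DifferentiableOn ℂ (fun w : ℂ => w ^ (α : ℂ) * cst) (Sector β) := fun w hw =>
    ((differentiableAt_id.cpow (differentiableAt_const _) (hsect_slit w hw)).mul
      (differentiableAt_const _)).differentiableWithinAt
  have hopen := sector_open (β := β) hβ.le
  have hvblap : ∀ w ∈ Sector β, lap vb w = 0 := fun w hw => lap_re_holo hopen hgdiff hw
  have hvbsmooth : ∀ w ∈ Sector β, ContDiffAt ℝ 2 vb w := by
    intro w hw
    have h1 : AnalyticAt ℂ (fun w : ℂ => w ^ (α : ℂ) * cst) w :=
      hgdiff.analyticAt (hopen.mem_nhds hw)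
    have h2 : ContDiffAt ℝ 2 (fun w : ℂ => w ^ (α : ℂ) * cst) w :=
      (h1.contDiffAt).restrict_scalars ℝ
    exact ContDiff.comp_contDiffAt w Complex.reCLM.contDiff h2
  suffices Hε : ∀ ε > (0:ℝ), Ψ z₀ ≤ ε * vb z₀ by
    by_contra hP
    push_neg at hP
    have hv0 := hvbnonneg z₀ (subset_closure hz₀)
    have hH := Hε (Ψ z₀ / (2 * (vb z₀ + 1))) (by positivity)
    have key2 : Ψ z₀ / (2 * (vb z₀ + 1)) * vb z₀ < Ψ z₀ := by
      rw [div_mul_eq_mul_div, div_lt_iff₀ (by positivity)]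
      nlinarith
    linarith
  intro ε hε
  -- choice of R
  have hRlarge : ∀ᶠ R in atTop, C * R ^ 2 * Real.log (Real.exp 1 + R) ≤ ε * (c₀ * R ^ α) := by
    set s : ℝ := α - 2 with hsdef
    have hs : 0 < s := by rw [hsdef]; linarith
    set c : ℝ := ε * c₀ / (2 * (|C| + 1)) with hcdef
    have hcpos : 0 < c := by positivity
    have hlo := (isLittleO_log_rpow_atTop hs).def hcpos
    filter_upwards [hlo, eventually_ge_atTop (3:ℝ), eventually_ge_atTop (Real.exp 1)]
      with R hR h3 hE
    have hR0 : 0 < R := by linarith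
    have hR1 : 1 ≤ R := by linarith
    have hlogpos : 0 ≤ Real.log R := Real.log_nonneg hR1
    have hRs : (0:ℝ) ≤ R ^ s := Real.rpow_nonneg hR0.le s
    rw [Real.norm_eq_abs, Real.norm_eq_abs, _root_.abs_of_nonneg hlogpos,
      _root_.abs_of_nonneg hRs] at hR
    have hlog2 : Real.log (Real.exp 1 + R) ≤ 2 * Real.log R := by
      have h4 : Real.exp 1 + R ≤ R ^ 2 := by nlinarith
      calc Real.log (Real.exp 1 + R) ≤ Real.log (R ^ 2) :=
            Real.log_le_log (by positivity) h4
      _ = 2 * Real.log R := by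
            rw [Real.log_pow]; push_cast; ring
    have hlognn : 0 ≤ Real.log (Real.exp 1 + R) :=
      Real.log_nonneg (by nlinarith [Real.exp_pos 1])
    have hstep1 : C * R ^ 2 * Real.log (Real.exp 1 + R)
        ≤ |C| * R ^ 2 * Real.log (Real.exp 1 + R) := by
      have hC' : C ≤ |C| := le_abs_self C
      nlinarith [mul_nonneg (sub_nonneg.mpr hC')
        (by positivity : (0:ℝ) ≤ R ^ 2 * Real.log (Real.exp 1 + R))]
    have hstep2 : |C| * R ^ 2 * Real.log (Real.exp 1 + R)
        ≤ |C| * R ^ 2 * (2 * (c * R ^ s)) := by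
      apply mul_le_mul_of_nonneg_left _ (by positivity)
      linarith
    have hRpow : R ^ 2 * R ^ s = R ^ α := by
      rw [← Real.rpow_natCast R 2, ← Real.rpow_add hR0]
      congr 1
      rw [hsdef]
      push_cast
      ring
    have hstep3 : |C| * R ^ 2 * (2 * (c * R ^ s)) = 2 * c * |C| * R ^ α := by
      rw [← hRpow]; ring
    have hstep4 : 2 * c * |C| ≤ ε * c₀ := by
      rw [hcdef]
      have hpos2 : (0:ℝ) < 2 * (|C| + 1) := by positivity
      have hu : 0 ≤ ε * c₀ / (2 * (|C| + 1)) := by positivity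
      have hq := div_mul_cancel₀ (ε * c₀) (ne_of_gt hpos2)
      nlinarith [abs_nonneg C]
    have hRα : (0:ℝ) ≤ R ^ α := Real.rpow_nonneg hR0.le α
    calc C * R ^ 2 * Real.log (Real.exp 1 + R)
        ≤ |C| * R ^ 2 * (2 * (c * R ^ s)) := le_trans hstep1 hstep2
    _ = 2 * c * |C| * R ^ α := hstep3
    _ ≤ ε * c₀ * R ^ α := mul_le_mul_of_nonneg_right hstep4 hRα
    _ = ε * (c₀ * R ^ α) := by ring
  obtain ⟨R, hRgt, hRbound⟩ := ((eventually_gt_atTop ‖z₀‖).and hRlarge).exists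
  have hR0 : 0 < R := lt_of_le_of_lt (norm_nonneg z₀) hRgt
  set V : Set ℂ := Sector β ∩ Metric.ball 0 R with hVdef
  have hVsub : V ⊆ Sector β := inter_subset_left
  have hclosV : closure V ⊆ closure (Sector β) := closure_mono inter_subset_left
  have hclosB : closure V ⊆ Metric.closedBall 0 R :=
    closure_minimal (inter_subset_right.trans Metric.ball_subset_closedBall)
      Metric.isClosed_closedBall
  have hmaxp : ∀ w ∈ V, Ψ w + -ε * vb w ≤ 0 := by
    apply maxp (h := fun w => Ψ w + -ε * vb w) (M := 0)
      (hVo := hopen.inter Metric.isOpen_ball)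
      (hVb := Metric.isBounded_ball.subset inter_subset_right)
    · exact (hcont.mono hclosV).add (continuousOn_const.mul (hvbcont.mono hclosV))
    · intro w hw
      exact (hC2.contDiffAt (hopen.mem_nhds hw.1)).add
        (contDiffAt_const.mul (hvbsmooth w hw.1))
    · intro w hw
      rw [lap_add (hC2.contDiffAt (hopen.mem_nhds hw.1))
        (contDiffAt_const.mul (hvbsmooth w hw.1)),
        lap_const_mul (hvbsmooth w hw.1) (-ε), hharm w hw.1, hvblap w hw.1]
      ring
    · rintro w ⟨hwc, hwV⟩
      have hwS : w ∈ closure (Sector β) := hclosV hwc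
      have hwB : ‖w‖ ≤ R := by
        have := hclosB hwc
        rwa [Metric.mem_closedBall, dist_zero_right] at this
      by_cases hwSec : w ∈ Sector β
      · have hwball : w ∉ Metric.ball 0 R := fun hb => hwV ⟨hwSec, hb⟩
        have hnr : ‖w‖ = R := le_antisymm hwB
          (by simpa [Metric.mem_ball, dist_zero_right, not_lt] using hwball)
        have hg := hgrowth w hwSec
        have hlb := hlow w hwSec.1 hwSec.2.1.le (le_of_lt hwSec.2.2)
        have h1 : Ψ w ≤ C * R ^ 2 * Real.log (Real.exp 1 + R) := by
          rw [← hnr]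
          exact le_trans (le_abs_self _) hg
        have h2 : ε * (c₀ * R ^ α) ≤ ε * vb w := by
          apply mul_le_mul_of_nonneg_left _ hε.le
          rw [← hnr]
          exact hlb
        linarith
      · have hwf : w ∈ frontier (Sector β) := by
          rw [hopen.frontier_eq]
          exact ⟨hwS, hwSec⟩
        have hΨ0 := hbc w hwf
        have hvw := hvbnonneg w hwS
        rw [hΨ0]
        nlinarith
  have hz₀V : z₀ ∈ V := ⟨hz₀, by rw [Metric.mem_ball, dist_zero_right]; exact hRgt⟩
  have hfin := hmaxp z₀ hz₀V
  linarith

/-- **Liouville-type uniqueness for the Dirichlet problem on a sector (Lemma 3.4,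
uniqueness part).** For `0 < β < 1/2`, any `Ψ` continuous on `Ω̄_β`, `C²` and harmonic on
`Ω_β`, vanishing on `∂Ω_β` and with `|Ψ(x)| ≤ C |x|² ln(e + |x|)`, vanishes identically. -/
theorem sector_dirichlet_liouville (β : ℝ) (hβ0 : 0 < β) (hβ : β < 1/2)
    (Ψ : ℂ → ℝ) (C : ℝ)
    (hcont : ContinuousOn Ψ (closure (Sector β)))
    (hC2 : ContDiffOn ℝ 2 Ψ (Sector β))
    (hharm : ∀ z ∈ Sector β, lap Ψ z = 0)
    (hbc : ∀ z ∈ frontier (Sector β), Ψ z = 0)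
    (hgrowth : ∀ z ∈ Sector β, |Ψ z| ≤ C * ‖z‖ ^ 2 * Real.log (Real.exp 1 + ‖z‖)) :
    ∀ z ∈ closure (Sector β), Ψ z = 0 := by
  have hpos := key β hβ0 hβ Ψ C hcont hC2 hharm hbc hgrowth
  have hneg := key β hβ0 hβ (fun z => -Ψ z) C hcont.neg hC2.neg
    (fun z hz => by rw [lap_neg, hharm z hz, neg_zero])
    (fun z hz => by rw [hbc z hz, neg_zero])
    (fun z hz => by rw [abs_neg]; exact hgrowth z hz)
  intro z hz
  by_cases hzS : z ∈ Sector β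
  · have h1 := hpos z hzS
    have h2 := hneg z hzS
    linarith
  · exact hbc z (by rw [(sector_open hβ.le).frontier_eq]; exact ⟨hz, hzS⟩)
end
end

section
/- Singular-integral bound for the second derivative of the sector Green's function: Let 0 < β < 1/2. For z, w in the sector Ω_β ⊆ ℂ, define P_β(z,w) := −((conj(w^{1/β}) − w^{1/β})/(4πβ²)) · ( z^{1/β−2} / ( (z^{1/β} − conj(w^{1/β}))² (z^{1/β} − w^{1/β})² ) ) · [ (1−β)(z^{1/β} − conj(w^{1/β}))(z^{1/β} − w^{1/β}) − z^{1/β}( 2 z^{1/β} − w^{1/β} − conj(w^{1/β}) ) ], where for z = r e^{iθ} with r > 0 and −π/2 < θ < π/2 one sets z^γ := r^γ e^{iγθ}. Then there exists a constant C = C(β) > 0 such that |P_β(z,w)| ≤ C / |z − w|² for all z, w ∈ Ω_β with z ≠ w. -/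
open Set Complex
open scoped ENNReal NNReal Real

noncomputable section

/-- The kernel `P_β(z,w) = ∂_z K_β(z,w)`, the second derivative of the Green's function of
the sector `Ω_β`. Here `z^γ = r^γ e^{iγθ}` for `z = r e^{iθ}`, `-π/2 < θ < π/2`, which on
this region agrees with the principal-branch complex power. -/
def Pker (β : ℝ) (z w : ℂ) : ℂ :=
  let Z : ℂ := z ^ ((1/β : ℝ) : ℂ)
  let W : ℂ := w ^ ((1/β : ℝ) : ℂ)
  let Wb : ℂ := (starRingEnd ℂ) W;
  -(((Wb - W) / ((4 * π * β ^ 2 : ℝ) : ℂ)) *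
    ((z ^ ((1/β - 2 : ℝ) : ℂ)) / ((Z - Wb) ^ 2 * (Z - W) ^ 2)) *
    (((1 - β : ℝ) : ℂ) * (Z - Wb) * (Z - W) - Z * (2 * Z - W - Wb)))

lemma cpow_abs' {z : ℂ} (hz : z ≠ 0) (γ : ℝ) :
    ‖z ^ (γ : ℂ)‖ = ‖z‖ ^ γ := by
  rw [Complex.norm_cpow_of_ne_zero hz]
  simp

lemma cpow_re' {z : ℂ} (hz : z ≠ 0) (γ : ℝ) :
    (z ^ (γ : ℂ)).re = ‖z‖ ^ γ * Real.cos (γ * z.arg) := by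
  rw [Complex.cpow_def_of_ne_zero hz, Complex.exp_re]
  simp [Complex.log_re, Complex.log_im, Complex.mul_re, Complex.mul_im,
    Real.rpow_def_of_pos (norm_pos_iff.mpr hz), mul_comm]

lemma cpow_im' {z : ℂ} (hz : z ≠ 0) (γ : ℝ) :
    (z ^ (γ : ℂ)).im = ‖z‖ ^ γ * Real.sin (γ * z.arg) := by
  rw [Complex.cpow_def_of_ne_zero hz, Complex.exp_im]
  simp [Complex.log_re, Complex.log_im, Complex.mul_re, Complex.mul_im,
    Real.rpow_def_of_pos (norm_pos_iff.mpr hz), mul_comm]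


lemma mem_sector_iff {β : ℝ} (hβ0 : 0 < β) (hβ : β < 1/2) {z : ℂ} :
    z ∈ Sector β ↔ 0 < z.im ∧ z.im * Real.cos (β * π) < z.re * Real.sin (β * π) := by
  have hβπ : 0 < β * π := by positivity
  have hβπ2 : β * π < π / 2 := by nlinarith [Real.pi_pos]
  constructor
  · rintro ⟨hz, ha0, haβ⟩
    have habs : (0:ℝ) < ‖z‖ := norm_pos_iff.mpr hz
    have hre := Complex.cos_arg hz
    have him := Complex.sin_arg z
    have harg_lt_pi : z.arg < π := lt_trans haβ (by linarith [Real.pi_pos])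
    have hsin : 0 < Real.sin z.arg := Real.sin_pos_of_pos_of_lt_pi ha0 harg_lt_pi
    have h1 : 0 < z.im := by
      rw [him] at hsin
      exact (div_pos_iff.mp hsin).resolve_right (by rintro ⟨_, h⟩; linarith) |>.1
    refine ⟨h1, ?_⟩
    have hsd : Real.sin (z.arg - β * π) < 0 := by
      apply Real.sin_neg_of_neg_of_neg_pi_lt (by linarith)
      linarith
    rw [Real.sin_sub] at hsd
    have hre' : z.re = ‖z‖ * Real.cos z.arg := by
      field_simp at hre; linarith [hre]
    have him' : z.im = ‖z‖ * Real.sin z.arg := by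
      field_simp at him; linarith [him]
    rw [hre', him']
    nlinarith
  · rintro ⟨h1, h2⟩
    have hz : z ≠ 0 := fun h => by simp [h] at h1
    have ha0 : 0 < z.arg := by
      rcases lt_or_eq_of_le (Complex.arg_nonneg_iff.mpr h1.le) with h | h
      · exact h
      · exact absurd (Complex.arg_eq_zero_iff.mp h.symm).2 (ne_of_gt h1)
    refine ⟨hz, ha0, ?_⟩
    by_contra hcon
    push_neg at hcon
    have harg_lt_pi : z.arg < π := Complex.arg_lt_pi_iff.mpr (Or.inr (ne_of_gt h1))
    have hsd : 0 ≤ Real.sin (z.arg - β * π) :=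
      Real.sin_nonneg_of_nonneg_of_le_pi (by linarith) (by linarith)
    rw [Real.sin_sub] at hsd
    have habs : (0:ℝ) < ‖z‖ := norm_pos_iff.mpr hz
    have hre := Complex.cos_arg hz
    have him := Complex.sin_arg z
    have hre' : z.re = ‖z‖ * Real.cos z.arg := by
      field_simp at hre; linarith [hre]
    have him' : z.im = ‖z‖ * Real.sin z.arg := by
      field_simp at him; linarith [him]
    rw [hre', him'] at h2
    nlinarith

lemma convex_strict {a₁ b₁ a₂ b₂ t : ℝ} (h₁ : a₁ < b₁) (h₂ : a₂ < b₂)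
    (ht0 : 0 ≤ t) (ht1 : t ≤ 1) : a₁ + t * (a₂ - a₁) < b₁ + t * (b₂ - b₁) := by
  rcases le_total (b₁ - a₁) (b₂ - a₂) with h | h
  · nlinarith [mul_nonneg ht0 (by linarith : (0:ℝ) ≤ (b₂ - a₂) - (b₁ - a₁))]
  · nlinarith [mul_nonneg (by linarith : (0:ℝ) ≤ 1 - t) (by linarith : (0:ℝ) ≤ (b₁ - a₁) - (b₂ - a₂))]

set_option maxHeartbeats 1000000 in
lemma keyLB {β : ℝ} (hβ0 : 0 < β) (hβ : β < 1/2) {z w : ℂ}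
    (hz : z ∈ Sector β) (hw : w ∈ Sector β) (hwz : ‖w‖ ≤ ‖z‖) :
    (1/β) * Real.sin (β*π/2) * ((‖z‖ / 2) ^ (1/β - 1) / 4) * ‖z - w‖
      ≤ ‖z ^ ((1/β : ℝ) : ℂ) - w ^ ((1/β : ℝ) : ℂ)‖ := by
  have hπ := Real.pi_pos
  set γ : ℝ := 1/β with hγ
  have hγ2 : 2 < γ := by rw [hγ]; rw [lt_div_iff₀ hβ0]; linarith
  set c : ℝ := γ - 1 with hc
  have hc1 : 1 < c := by simp [hc]; linarith
  set c₀ : ℝ := (1 - β) * π / 2 with hc₀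
  set ξ : ℝ → ℂ := fun t => w + (t:ℂ) * (z - w) with hξ
  -- segment in sector
  have hseg : ∀ t ∈ Set.Icc (0:ℝ) 1, ξ t ∈ Sector β := by
    intro t ht
    have hz' := (mem_sector_iff hβ0 hβ).mp hz
    have hw' := (mem_sector_iff hβ0 hβ).mp hw
    rw [mem_sector_iff hβ0 hβ]
    have hre : (ξ t).re = w.re + t * (z.re - w.re) := by simp [hξ]
    have him : (ξ t).im = w.im + t * (z.im - w.im) := by simp [hξ]
    obtain ⟨ht0, ht1⟩ := ht
    constructor
    · rw [him]
      have := convex_strict (a₁ := 0) (a₂ := 0) (b₁ := w.im) (b₂ := z.im) hw'.1 hz'.1 ht0 ht1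
      simpa using this
    · rw [him, hre]
      have := convex_strict hw'.2 hz'.2 ht0 ht1
      calc (w.im + t * (z.im - w.im)) * Real.cos (β * π)
          = w.im * Real.cos (β * π) + t * (z.im * Real.cos (β * π) - w.im * Real.cos (β * π)) := by ring
        _ < w.re * Real.sin (β * π) + t * (z.re * Real.sin (β * π) - w.re * Real.sin (β * π)) := this
        _ = (w.re + t * (z.re - w.re)) * Real.sin (β * π) := by ring
  have hξne : ∀ t ∈ Set.Icc (0:ℝ) 1, ξ t ≠ 0 := fun t ht => ((hseg t ht)).1
  have hξim : ∀ t ∈ Set.Icc (0:ℝ) 1, 0 < (ξ t).im := by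
    intro t ht
    exact ((mem_sector_iff hβ0 hβ).mp (hseg t ht)).1
  have hslit : ∀ t ∈ Set.Icc (0:ℝ) 1, ξ t ∈ Complex.slitPlane := by
    intro t ht
    exact Complex.mem_slitPlane_iff.mpr (Or.inr (ne_of_gt (hξim t ht)))
  -- derivative
  have hderiv : ∀ t ∈ Set.uIcc (0:ℝ) 1, HasDerivAt (fun s : ℝ => ξ s ^ ((γ:ℝ):ℂ))
      (((γ:ℝ):ℂ) * (z - w) * ξ t ^ (((γ:ℝ):ℂ) - 1)) t := by
    intro t ht
    rw [Set.uIcc_of_le (by norm_num : (0:ℝ) ≤ 1)] at ht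
    have h1 : HasDerivAt (fun s : ℝ => (s:ℂ)) 1 t := by
      simpa using (hasDerivAt_id t).ofReal_comp
    have h2 : HasDerivAt ξ (z - w) t := by
      simpa [hξ] using (h1.mul_const (z - w)).const_add w
    have hout : HasDerivAt (fun x : ℂ => x ^ ((γ:ℝ):ℂ)) (((γ:ℝ):ℂ) * ξ t ^ (((γ:ℝ):ℂ) - 1)) (ξ t) :=
      (Complex.hasStrictDerivAt_cpow_const (hslit t ht)).hasDerivAt
    have h3 := HasDerivAt.scomp t hout h2
    rw [show ((γ:ℝ):ℂ) * (z - w) * ξ t ^ (((γ:ℝ):ℂ) - 1) = (z - w) • (((γ:ℝ):ℂ) * ξ t ^ (((γ:ℝ):ℂ) - 1)) by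
      rw [smul_eq_mul]; ring]
    exact h3
  -- continuity / integrability of the integrand
  have hcontξ : Continuous ξ := by fun_prop
  have hcont : ContinuousOn (fun t : ℝ => ξ t ^ (((γ:ℝ):ℂ) - 1)) (Set.Icc (0:ℝ) 1) := by
    intro t ht
    exact ((continuousAt_cpow_const (hslit t ht)).comp
      (hcontξ.continuousAt)).continuousWithinAt
  have hint : IntervalIntegrable (fun t : ℝ => ξ t ^ (((γ:ℝ):ℂ) - 1)) MeasureTheory.volume 0 1 := by
    apply ContinuousOn.intervalIntegrable
    rwa [Set.uIcc_of_le (by norm_num : (0:ℝ) ≤ 1)]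
  have hint2 : IntervalIntegrable
      (fun t : ℝ => ((γ:ℝ):ℂ) * (z - w) * ξ t ^ (((γ:ℝ):ℂ) - 1)) MeasureTheory.volume 0 1 :=
    (hint.const_mul _)
  -- FTC
  have hFTC := intervalIntegral.integral_eq_sub_of_hasDerivAt hderiv hint2
  have hξ1 : ξ 1 = z := by simp [hξ]
  have hξ0 : ξ 0 = w := by simp [hξ]
  rw [hξ1, hξ0, intervalIntegral.integral_const_mul] at hFTC
  set S : ℂ := ∫ t in (0:ℝ)..1, ξ t ^ (((γ:ℝ):ℂ) - 1) with hS
  -- lower bound on abs S via real part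
  set e : ℂ := Complex.exp (-(c₀:ℂ) * Complex.I) with he
  have habse : ‖e‖ = 1 := by
    rw [he, Complex.norm_exp]; simp
  have hre_le : (e * S).re ≤ ‖S‖ := by
    calc (e * S).re ≤ ‖e * S‖ := Complex.re_le_norm _
    _ = ‖S‖ := by rw [norm_mul, habse, one_mul]
  -- (e * S).re as an integral
  have heS : e * S = ∫ t in (0:ℝ)..1, e * ξ t ^ (((γ:ℝ):ℂ) - 1) := by
    rw [hS, intervalIntegral.integral_const_mul]
  have hreInt : (e * S).re = ∫ t in (0:ℝ)..1, (e * ξ t ^ (((γ:ℝ):ℂ) - 1)).re := by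
    rw [heS]
    exact (Complex.reCLM.intervalIntegral_comp_comm (hint.const_mul e)).symm
  -- pointwise lower bound for the real part
  have hcast : ((γ:ℝ):ℂ) - 1 = ((c:ℝ):ℂ) := by rw [hc]; push_cast; ring
  have hsinpos : 0 < Real.sin (β * π / 2) := by
    apply Real.sin_pos_of_pos_of_lt_pi (by positivity)
    nlinarith
  have hpt : ∀ t ∈ Set.Icc (0:ℝ) 1,
      Real.sin (β * π / 2) * ‖ξ t‖ ^ c ≤ (e * ξ t ^ (((γ:ℝ):ℂ) - 1)).re := by
    intro t ht
    have hne := hξne t ht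
    obtain ⟨_, harg0, hargβ⟩ := hseg t ht
    rw [hcast]
    have hre : (e * ξ t ^ ((c:ℝ):ℂ)).re
        = ‖ξ t‖ ^ c * Real.cos (c * (ξ t).arg - c₀) := by
      rw [Complex.mul_re, cpow_re' hne, cpow_im' hne]
      have her : e.re = Real.cos c₀ := by
        rw [he, Complex.exp_re]; simp
      have hei : e.im = -Real.sin c₀ := by
        rw [he, Complex.exp_im]; simp
      rw [her, hei, Real.cos_sub]
      ring
    rw [hre]
    have hcpos : 0 < c := by linarith
    have hθ1 : 0 < c * (ξ t).arg := mul_pos hcpos harg0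
    have hθ2 : c * (ξ t).arg < (1 - β) * π := by
      have : c * (ξ t).arg < c * (β * π) := by
        exact (mul_lt_mul_iff_right₀ hcpos).mpr hargβ
      have hcb : c * (β * π) = (1 - β) * π := by
        rw [hc, hγ]; field_simp
      linarith
    have habs : |c * (ξ t).arg - c₀| ≤ c₀ := by
      rw [abs_le]; constructor <;> [skip; skip] <;> rw [hc₀] <;> nlinarith
    have hcos : Real.cos c₀ ≤ Real.cos (c * (ξ t).arg - c₀) := by
      rw [← Real.cos_abs (c * (ξ t).arg - c₀)]
      apply Real.cos_le_cos_of_nonneg_of_le_pi (abs_nonneg _) (by rw [hc₀]; nlinarith)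
      exact habs
    have hcos' : Real.sin (β * π / 2) ≤ Real.cos (c * (ξ t).arg - c₀) := by
      have : Real.cos c₀ = Real.sin (β * π / 2) := by
        rw [hc₀, show (1 - β) * π / 2 = π / 2 - β * π / 2 by ring, Real.cos_pi_div_two_sub]
      linarith
    have hA : (0:ℝ) ≤ ‖ξ t‖ ^ c := Real.rpow_nonneg (norm_nonneg _) c
    nlinarith
  have hpt0 : ∀ t ∈ Set.Icc (0:ℝ) 1, 0 ≤ (e * ξ t ^ (((γ:ℝ):ℂ) - 1)).re := by
    intro t ht
    have := hpt t ht
    have hA : (0:ℝ) ≤ ‖ξ t‖ ^ c := Real.rpow_nonneg (norm_nonneg _) c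
    nlinarith
  -- on [3/4, 1] the modulus of ξ t is at least |z|/2
  have hmod : ∀ t ∈ Set.Icc (3/4:ℝ) 1, ‖z‖ / 2 ≤ ‖ξ t‖ := by
    intro t ht
    obtain ⟨ht0, ht1⟩ := ht
    have hzw : ‖z - w‖ ≤ 2 * ‖z‖ := by
      have := norm_sub_le z w
      linarith
    have hzξ : z - ξ t = (((1:ℝ) - t : ℝ):ℂ) * (z - w) := by
      rw [hξ]; push_cast; ring
    have habs1 : ‖z - ξ t‖ = (1 - t) * ‖z - w‖ := by
      rw [hzξ, norm_mul, Complex.norm_real, Real.norm_eq_abs, _root_.abs_of_nonneg (by linarith)]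
    have htri : ‖z‖ - ‖z - ξ t‖ ≤ ‖ξ t‖ := by
      have h := norm_sub_norm_le z (z - ξ t)
      simp only [sub_sub_cancel] at h
      linarith
    have : (1 - t) * ‖z - w‖ ≤ (1/4) * (2 * ‖z‖) := by
      apply mul_le_mul (by linarith) hzw (norm_nonneg _) (by norm_num)
    nlinarith [habs1, htri]
  -- split the integral
  have hcontre : ContinuousOn (fun t : ℝ => (e * ξ t ^ (((γ:ℝ):ℂ) - 1)).re) (Set.Icc (0:ℝ) 1) :=
    Complex.continuous_re.comp_continuousOn ((continuousOn_const).mul hcont)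
  have hintre : ∀ a b : ℝ, Set.uIcc a b ⊆ Set.Icc (0:ℝ) 1 →
      IntervalIntegrable (fun t : ℝ => (e * ξ t ^ (((γ:ℝ):ℂ) - 1)).re) MeasureTheory.volume a b :=
    fun a b hab => (hcontre.mono hab).intervalIntegrable
  have hsplit : (∫ t in (0:ℝ)..1, (e * ξ t ^ (((γ:ℝ):ℂ) - 1)).re)
      = (∫ t in (0:ℝ)..(3/4:ℝ), (e * ξ t ^ (((γ:ℝ):ℂ) - 1)).re)
        + ∫ t in (3/4:ℝ)..1, (e * ξ t ^ (((γ:ℝ):ℂ) - 1)).re := by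
    rw [intervalIntegral.integral_add_adjacent_intervals
      (hintre 0 (3/4) (by rw [Set.uIcc_of_le (by norm_num)]; apply Set.Icc_subset_Icc <;> norm_num))
      (hintre (3/4) 1 (by rw [Set.uIcc_of_le (by norm_num)]; apply Set.Icc_subset_Icc <;> norm_num))]
  set K : ℝ := Real.sin (β * π / 2) * (‖z‖ / 2) ^ c with hK
  have hK0 : 0 ≤ K := by
    apply mul_nonneg hsinpos.le (Real.rpow_nonneg (by positivity) _)
  have hpart1 : 0 ≤ ∫ t in (0:ℝ)..(3/4:ℝ), (e * ξ t ^ (((γ:ℝ):ℂ) - 1)).re := by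
    apply intervalIntegral.integral_nonneg (by norm_num)
    intro u hu
    exact hpt0 u ⟨hu.1, by linarith [hu.2]⟩
  have hpart2 : (1/4:ℝ) * K ≤ ∫ t in (3/4:ℝ)..1, (e * ξ t ^ (((γ:ℝ):ℂ) - 1)).re := by
    have : (∫ _t in (3/4:ℝ)..1, K) ≤ ∫ t in (3/4:ℝ)..1, (e * ξ t ^ (((γ:ℝ):ℂ) - 1)).re := by
      apply intervalIntegral.integral_mono_on (by norm_num) intervalIntegrable_const
        (hintre (3/4) 1 (by rw [Set.uIcc_of_le (by norm_num)]; apply Set.Icc_subset_Icc <;> norm_num))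
      intro u hu
      have hu' : u ∈ Set.Icc (0:ℝ) 1 := ⟨by linarith [hu.1], hu.2⟩
      have h1 := hpt u hu'
      have h2 := hmod u hu
      have h3 : (‖z‖ / 2) ^ c ≤ ‖ξ u‖ ^ c :=
        Real.rpow_le_rpow (by positivity) h2 (by linarith)
      rw [hK]
      nlinarith
    rw [intervalIntegral.integral_const] at this
    calc (1/4:ℝ) * K = ((1:ℝ) - 3/4) • K := by norm_num
      _ ≤ _ := this
  have hSlb : (1/4:ℝ) * K ≤ ‖S‖ := by
    calc (1/4:ℝ) * K ≤ (∫ t in (0:ℝ)..1, (e * ξ t ^ (((γ:ℝ):ℂ) - 1)).re) := by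
          rw [hsplit]; linarith
      _ = (e * S).re := hreInt.symm
      _ ≤ ‖S‖ := hre_le
  -- conclude
  have habsFTC : ‖z ^ ((γ:ℝ):ℂ) - w ^ ((γ:ℝ):ℂ)‖ = γ * ‖z - w‖ * ‖S‖ := by
    rw [← hFTC, norm_mul, norm_mul, Complex.norm_real, Real.norm_eq_abs, abs_of_pos (by positivity : (0:ℝ) < γ)]
  rw [habsFTC]
  have habszw : 0 ≤ ‖z - w‖ := norm_nonneg _
  have hγpos : (0:ℝ) < γ := by positivity
  calc γ * Real.sin (β*π/2) * ((‖z‖ / 2) ^ c / 4) * ‖z - w‖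
      = γ * ‖z - w‖ * ((1/4) * K) := by rw [hK]; ring
    _ ≤ γ * ‖z - w‖ * ‖S‖ := by
        apply mul_le_mul_of_nonneg_left hSlb (by positivity)

set_option maxHeartbeats 1000000 in
/-- **Singular-integral bound for the second derivative of the sector Green's function
(inequality (3.9)).** For `0 < β < 1/2` there is `C = C(β) > 0` with
`|P_β(z,w)| ≤ C / |z-w|²` for all `z ≠ w` in `Ω_β`. -/
theorem sector_kernel_bound (β : ℝ) (hβ0 : 0 < β) (hβ : β < 1/2) :
    ∃ C : ℝ, 0 < C ∧
      ∀ z ∈ Sector β, ∀ w ∈ Sector β, z ≠ w →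
        ‖Pker β z w‖ ≤ C / ‖z - w‖ ^ 2 := by
  have hπ := Real.pi_pos
  have hsin : 0 < Real.sin (β * π / 2) := by
    apply Real.sin_pos_of_pos_of_lt_pi (by positivity)
    nlinarith
  set κ : ℝ := (1/β) * Real.sin (β*π/2) * ((1/2:ℝ) ^ (1/β - 1)) / 4 with hκdef
  have hκ : 0 < κ := by
    rw [hκdef]
    have h2 : (0:ℝ) < (1/2:ℝ) ^ (1/β - 1) := Real.rpow_pos_of_pos (by norm_num) _
    positivity
  refine ⟨(1/(π*β^2)) * (1/κ + 1/κ^2), by positivity, ?_⟩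
  intro z hzS w hwS hne
  obtain ⟨hz0, hargz0, hargzβ⟩ := hzS
  obtain ⟨hw0, hargw0, hargwβ⟩ := hwS
  set q : ℝ := ‖z‖ with hqdef
  set m : ℝ := max (‖z‖) (‖w‖) with hmdef
  set d : ℝ := ‖z - w‖ with hddef
  set Z : ℂ := z ^ ((1/β : ℝ) : ℂ) with hZdef
  set W : ℂ := w ^ ((1/β : ℝ) : ℂ) with hWdef
  set Wb : ℂ := (starRingEnd ℂ) W with hWbdef
  set a : ℝ := ‖Z - Wb‖ with hadef
  set b : ℝ := ‖Z - W‖ with hbdef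
  set P1 : ℝ := q ^ (1/β - 2) with hP1def
  set P2 : ℝ := q ^ (1/β : ℝ) with hP2def
  set v : ℝ := m ^ (1/β - 1) with hvdef
  set u : ℝ := q ^ (1/β - 1) with hudef
  have hq : 0 < q := norm_pos_iff.mpr hz0
  have hwabs : 0 < ‖w‖ := norm_pos_iff.mpr hw0
  have hm : 0 < m := lt_max_of_lt_left hq
  have hqm : q ≤ m := le_max_left _ _
  have hd : 0 < d := norm_pos_iff.mpr (sub_ne_zero.mpr hne)
  have hdm : d ≤ 2 * m := by
    have := norm_sub_le z w
    have h1 : ‖z‖ ≤ m := le_max_left _ _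
    have h2 : ‖w‖ ≤ m := le_max_right _ _
    rw [hddef]; linarith
  have hγβ : 2 < 1/β := by rw [lt_div_iff₀ hβ0]; linarith
  -- lower bound on b
  have hb0m : (1/β) * Real.sin (β*π/2) * ((m / 2) ^ (1/β - 1) / 4) * d ≤ b := by
    rcases le_total (‖w‖) (‖z‖) with hcmp | hcmp
    · have h := keyLB hβ0 hβ ⟨hz0, hargz0, hargzβ⟩ ⟨hw0, hargw0, hargwβ⟩ hcmp
      rw [hmdef, max_eq_left hcmp]
      exact h
    · have h := keyLB hβ0 hβ ⟨hw0, hargw0, hargwβ⟩ ⟨hz0, hargz0, hargzβ⟩ hcmp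
      rw [hmdef, max_eq_right hcmp]
      rw [hbdef, hZdef, hWdef, norm_sub_rev, hddef, norm_sub_rev]
      exact h
  have h4 : κ * (d * v) ≤ b := by
    have hsplit : (m / 2) ^ (1/β - 1) = v * (1/2:ℝ) ^ (1/β - 1) := by
      rw [hvdef, show m / 2 = m * (1/2) by ring, Real.mul_rpow hm.le (by norm_num)]
    calc κ * (d * v) = (1/β) * Real.sin (β*π/2) * ((v * (1/2:ℝ) ^ (1/β - 1)) / 4) * d := by
          rw [hκdef]; ring
      _ = (1/β) * Real.sin (β*π/2) * ((m / 2) ^ (1/β - 1) / 4) * d := by rw [hsplit]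
      _ ≤ b := hb0m
  have hv : 0 < v := Real.rpow_pos_of_pos hm _
  have hb : 0 < b := lt_of_lt_of_le (by positivity) h4
  -- imaginary parts of Z and W are positive
  have hZim : 0 < Z.im := by
    rw [hZdef, cpow_im' hz0]
    apply mul_pos (Real.rpow_pos_of_pos hq _)
    apply Real.sin_pos_of_pos_of_lt_pi (by positivity)
    calc (1/β) * z.arg < (1/β) * (β * π) := by
          apply mul_lt_mul_of_pos_left hargzβ (by positivity)
      _ = π := by field_simp
  have hWim : 0 < W.im := by
    rw [hWdef, cpow_im' hw0]
    apply mul_pos (Real.rpow_pos_of_pos hwabs _)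
    apply Real.sin_pos_of_pos_of_lt_pi (by positivity)
    calc (1/β) * w.arg < (1/β) * (β * π) := by
          apply mul_lt_mul_of_pos_left hargwβ (by positivity)
      _ = π := by field_simp
  -- b ≤ a
  have ha0 : (0:ℝ) ≤ a := norm_nonneg _
  have hsq : b ^ 2 ≤ a ^ 2 := by
    rw [hbdef, hadef, Complex.sq_norm, Complex.sq_norm, hWbdef]
    simp only [Complex.normSq_apply, Complex.sub_re, Complex.sub_im, Complex.conj_re,
      Complex.conj_im]
    have h := mul_pos hZim hWim
    nlinarith [h]
  have hba : b ≤ a := le_of_pow_le_pow_left₀ (by norm_num : (2:ℕ) ≠ 0) ha0 hsq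
  have ha : 0 < a := lt_of_lt_of_le hb hba
  -- |Wb - W| ≤ 2a
  have hWbW : ‖Wb - W‖ ≤ 2 * a := by
    have h1 := Complex.norm_le_abs_re_add_abs_im (Wb - W)
    have h2 := Complex.abs_im_le_norm (Z - Wb)
    simp only [Complex.sub_re, Complex.sub_im, Complex.conj_re, Complex.conj_im, hWbdef] at h1 h2
    rw [hWbdef]
    have him : |W.im + W.im| ≤ 2 * (Z.im + W.im) := by
      rw [_root_.abs_of_nonneg (by linarith)]; linarith
    have him2 : |Z.im - -W.im| = Z.im + W.im := by
      rw [_root_.abs_of_nonneg (by linarith)]; ring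
    calc ‖(starRingEnd ℂ) W - W‖ ≤ |W.re - W.re| + |(-W.im) - W.im| := h1
      _ = |W.im + W.im| := by
          rw [show W.re - W.re = (0:ℝ) by ring, show -W.im - W.im = -(W.im + W.im) by ring,
            abs_neg, abs_zero, zero_add]
      _ ≤ 2 * (Z.im + W.im) := him
      _ ≤ 2 * a := by rw [hadef]; rw [him2] at h2; linarith
  -- bracket bound
  set Br : ℂ := ((1 - β : ℝ) : ℂ) * (Z - Wb) * (Z - W) - Z * (2 * Z - W - Wb) with hBrdef
  have habsZ : ‖Z‖ = P2 := by rw [hZdef, cpow_abs' hz0, hP2def, hqdef]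
  have hP2pos : 0 < P2 := Real.rpow_pos_of_pos hq _
  have hBr : ‖Br‖ ≤ a * ((1 - β) * b + 2 * P2) := by
    have hid : Br = (((1 - β : ℝ) : ℂ) * (Z - Wb) * (Z - W) - Z * (Z - W)) - Z * (Z - Wb) := by
      rw [hBrdef]; ring
    have ht1 : ‖Br‖ ≤ ‖((1 - β : ℝ) : ℂ) * (Z - Wb) * (Z - W)‖
        + ‖Z * (Z - W)‖ + ‖Z * (Z - Wb)‖ := by
      rw [hid]
      have u1 := norm_sub_le ((((1 - β : ℝ) : ℂ) * (Z - Wb) * (Z - W)) - Z * (Z - W)) (Z * (Z - Wb))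
      have u2 := norm_sub_le (((1 - β : ℝ) : ℂ) * (Z - Wb) * (Z - W)) (Z * (Z - W))
      linarith only [u1, u2]
    have he1 : ‖((1 - β : ℝ) : ℂ) * (Z - Wb) * (Z - W)‖ = (1 - β) * a * b := by
      rw [norm_mul, norm_mul, Complex.norm_real, Real.norm_eq_abs, _root_.abs_of_nonneg (by linarith : (0:ℝ) ≤ 1 - β),
        ← hadef, ← hbdef]
    have he2 : ‖Z * (Z - W)‖ = P2 * b := by rw [norm_mul, habsZ, ← hbdef]
    have he3 : ‖Z * (Z - Wb)‖ = P2 * a := by rw [norm_mul, habsZ, ← hadef]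
    rw [he1, he2, he3] at ht1
    have hmono : P2 * b ≤ P2 * a := mul_le_mul_of_nonneg_left hba hP2pos.le
    have : a * ((1 - β) * b + 2 * P2) = (1 - β) * a * b + P2 * a + P2 * a := by ring
    linarith only [ht1, hmono, this]
  -- rpow arithmetic
  have hP1pos : 0 < P1 := Real.rpow_pos_of_pos hq _
  have hu : 0 < u := Real.rpow_pos_of_pos hq _
  have hP1m : P1 * d ≤ 2 * v := by
    have h1 : P1 ≤ m ^ (1/β - 2) := Real.rpow_le_rpow hq.le hqm (by linarith)
    have h2 : m ^ (1/β - 2) * m = v := by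
      rw [hvdef, show (1/β - 1 : ℝ) = (1/β - 2) + 1 by ring, Real.rpow_add hm, Real.rpow_one]
    have t1 : P1 * d ≤ P1 * (2 * m) := mul_le_mul_of_nonneg_left hdm hP1pos.le
    have t2 : P1 * (2 * m) ≤ m ^ (1/β - 2) * (2 * m) :=
      mul_le_mul_of_nonneg_right h1 (by positivity)
    have t3 : m ^ (1/β - 2) * (2 * m) = 2 * v := by rw [← h2]; ring
    linarith only [t1, t2, t3]
  have hP12 : P1 * P2 = u * u := by
    rw [hP1def, hP2def, hudef, ← Real.rpow_add hq, ← Real.rpow_add hq]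
    congr 1; ring
  have huv : u ≤ v := Real.rpow_le_rpow hq.le hqm (by linarith)
  have hdv : d * v ≤ b * κ⁻¹ := by
    have := (le_div_iff₀ hκ).mpr (show d * v * κ ≤ b by linarith only [h4])
    rwa [div_eq_mul_inv] at this
  -- the central estimate
  have inner : P1 * ((1 - β) * b + 2 * P2) * d ^ 2 ≤ (2 * κ⁻¹ + 2 * (κ⁻¹ * κ⁻¹)) * b ^ 2 := by
    have e1 : P1 * b * d ^ 2 ≤ 2 * (b * κ⁻¹) * b := by
      have t1 : (P1 * d) * (b * d) ≤ (2 * v) * (b * d) :=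
        mul_le_mul_of_nonneg_right hP1m (by positivity)
      have t2 : 2 * b * (d * v) ≤ 2 * b * (b * κ⁻¹) :=
        mul_le_mul_of_nonneg_left hdv (by positivity)
      linarith only [t1, t2]
    have e2 : P1 * P2 * d ^ 2 ≤ (b * κ⁻¹) * (b * κ⁻¹) := by
      have t3 : u * u ≤ v * v := mul_le_mul huv huv hu.le hv.le
      have t4 : (d * v) * (d * v) ≤ (b * κ⁻¹) * (b * κ⁻¹) :=
        mul_le_mul hdv hdv (by positivity) (by positivity)
      have t5 : (u * u) * d ^ 2 ≤ (v * v) * d ^ 2 := mul_le_mul_of_nonneg_right t3 (by positivity)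
      calc P1 * P2 * d ^ 2 = (u * u) * d ^ 2 := by rw [hP12]
        _ ≤ (v * v) * d ^ 2 := t5
        _ ≤ (b * κ⁻¹) * (b * κ⁻¹) := by linarith only [t4]
    have e0 : 0 ≤ P1 * b * d ^ 2 := by positivity
    have e3 : 0 ≤ β * (P1 * b * d ^ 2) := mul_nonneg hβ0.le e0
    have expand : P1 * ((1 - β) * b + 2 * P2) * d ^ 2
        = P1 * b * d ^ 2 - β * (P1 * b * d ^ 2) + 2 * (P1 * P2 * d ^ 2) := by ring
    linarith only [e1, e2, e3, expand]
  have key : ‖Wb - W‖ * P1 * ‖Br‖ * d ^ 2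
      ≤ (4 * κ⁻¹ + 4 * (κ⁻¹ * κ⁻¹)) * (a ^ 2 * b ^ 2) := by
    have s1 : ‖Wb - W‖ * P1 * ‖Br‖ * d ^ 2
        ≤ (2 * a) * P1 * (a * ((1 - β) * b + 2 * P2)) * d ^ 2 := by
      have m1 : ‖Wb - W‖ * P1 ≤ (2 * a) * P1 :=
        mul_le_mul_of_nonneg_right hWbW hP1pos.le
      have m2 : ‖Wb - W‖ * P1 * ‖Br‖
          ≤ ((2 * a) * P1) * (a * ((1 - β) * b + 2 * P2)) :=
        mul_le_mul m1 hBr (norm_nonneg _)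
          (by positivity)
      exact mul_le_mul_of_nonneg_right m2 (by positivity)
    have s2 : (2 * a) * P1 * (a * ((1 - β) * b + 2 * P2)) * d ^ 2
        = 2 * a ^ 2 * (P1 * ((1 - β) * b + 2 * P2) * d ^ 2) := by ring
    have s3 : 2 * a ^ 2 * (P1 * ((1 - β) * b + 2 * P2) * d ^ 2)
        ≤ 2 * a ^ 2 * ((2 * κ⁻¹ + 2 * (κ⁻¹ * κ⁻¹)) * b ^ 2) :=
      mul_le_mul_of_nonneg_left inner (by positivity)
    calc ‖Wb - W‖ * P1 * ‖Br‖ * d ^ 2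
        ≤ 2 * a ^ 2 * (P1 * ((1 - β) * b + 2 * P2) * d ^ 2) := by rw [← s2]; exact s1
      _ ≤ 2 * a ^ 2 * ((2 * κ⁻¹ + 2 * (κ⁻¹ * κ⁻¹)) * b ^ 2) := s3
      _ = (4 * κ⁻¹ + 4 * (κ⁻¹ * κ⁻¹)) * (a ^ 2 * b ^ 2) := by ring
  -- compute the norm of the kernel
  have h4πβ : (0:ℝ) < 4 * π * β ^ 2 := by positivity
  have hPk : ‖Pker β z w‖
      = ‖Wb - W‖ / (4 * π * β ^ 2) * (P1 / (a ^ 2 * b ^ 2)) * ‖Br‖ := by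
    have hunfold : Pker β z w
        = -(((Wb - W) / ((4 * π * β ^ 2 : ℝ) : ℂ)) *
        ((z ^ ((1/β - 2 : ℝ) : ℂ)) / ((Z - Wb) ^ 2 * (Z - W) ^ 2)) * Br) := rfl
    rw [hunfold, norm_neg, norm_mul, norm_mul, norm_div, norm_div,
      norm_mul, norm_pow, norm_pow, Complex.norm_real, Real.norm_eq_abs,
      _root_.abs_of_pos h4πβ, cpow_abs' hz0, ← hadef, ← hbdef, ← hqdef, ← hP1def]
  -- conclude
  have hd2 : (0:ℝ) < ‖z - w‖ ^ 2 := by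
    have : ‖z - w‖ = d := by rw [hddef]
    rw [this]; positivity
  rw [le_div_iff₀ hd2]
  have hnorm : ‖z - w‖ = d := by rw [hddef]
  rw [hnorm, hPk]
  have expand : ‖Wb - W‖ / (4 * π * β ^ 2) * (P1 / (a ^ 2 * b ^ 2)) * ‖Br‖
      * d ^ 2
      = (‖Wb - W‖ * P1 * ‖Br‖ * d ^ 2) / ((4 * π * β ^ 2) * (a ^ 2 * b ^ 2))
      := by ring
  rw [expand, div_le_iff₀ (by positivity)]
  calc ‖Wb - W‖ * P1 * ‖Br‖ * d ^ 2
      ≤ (4 * κ⁻¹ + 4 * (κ⁻¹ * κ⁻¹)) * (a ^ 2 * b ^ 2) := key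
    _ = 1/(π*β^2) * (1/κ + 1/κ^2) * (4 * π * β ^ 2 * (a ^ 2 * b ^ 2)) := by
        field_simp
end
end

section
/- Sign of the solution of the elliptic boundary value problem on [0,L] for L < π/2: Let 0 < L < π/2, let g : [0,L] → ℝ be continuous with g ≥ 0, and let G : [0,L] → ℝ be twice continuously differentiable with 4G + G'' = g on [0,L] and G(0) = G(L) = 0. Then G ≤ 0 on [0,L], and consequently G'' ≥ g on [0,L]. -/
open Set Real
open scoped Real

noncomputable section

/-- **Sign of the solution of the elliptic boundary value problem on `[0,L]` for `L < π/2`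
(Lemma 4.5).** If `g ≥ 0` is continuous on `[0,L]` and `G` is `C²` with `4G + G'' = g` and
`G(0) = G(L) = 0`, then `G ≤ 0` on `[0,L]`, and consequently `G'' ≥ g` on `[0,L]`. -/
theorem elliptic_bvp_sign
    (L : ℝ) (hL0 : 0 < L) (hL : L < π/2)
    (g G : ℝ → ℝ)
    (hg : ContinuousOn g (Icc 0 L))
    (hgpos : ∀ θ ∈ Icc (0:ℝ) L, 0 ≤ g θ)
    (hGC2 : ContDiffOn ℝ 2 G (Icc 0 L))
    (hGeq : ∀ θ ∈ Icc (0:ℝ) L, 4 * G θ + iteratedDerivWithin 2 G (Icc 0 L) θ = g θ)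
    (hbc0 : G 0 = 0) (hbcL : G L = 0) :
    ∀ θ ∈ Icc (0:ℝ) L, G θ ≤ 0 ∧ g θ ≤ iteratedDerivWithin 2 G (Icc 0 L) θ := by
  set s : Set ℝ := Icc (0:ℝ) L with hs_def
  have hs : UniqueDiffOn ℝ s := uniqueDiffOn_Icc hL0
  set G1 : ℝ → ℝ := derivWithin G s with hG1_def
  set G2 : ℝ → ℝ := derivWithin G1 s with hG2_def
  -- iterated derivative identification
  have hiter : ∀ θ ∈ s, iteratedDerivWithin 2 G s θ = G2 θ := by
    intro θ hθ
    have h1 : iteratedDerivWithin 2 G s θ = iteratedDerivWithin 1 (derivWithin G s) s θ :=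
      congrFun iteratedDerivWithin_succ' θ
    rw [h1, iteratedDerivWithin_one]
  -- differentiability facts
  have hGdiff : DifferentiableOn ℝ G s := hGC2.differentiableOn (by norm_num)
  have hG1C1 : ContDiffOn ℝ 1 G1 s := hGC2.derivWithin hs (by norm_num)
  have hG1diff : DifferentiableOn ℝ G1 s := hG1C1.differentiableOn one_ne_zero
  have hGd : ∀ θ ∈ s, HasDerivWithinAt G (G1 θ) s θ := fun θ hθ =>
    (hGdiff θ hθ).hasDerivWithinAt
  have hG1d : ∀ θ ∈ s, HasDerivWithinAt G1 (G2 θ) s θ := fun θ hθ =>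
    (hG1diff θ hθ).hasDerivWithinAt
  -- the comparison function φ θ = cos (2θ - L)
  set φ : ℝ → ℝ := fun θ => Real.cos (2*θ - L) with hφ_def
  have hφd : ∀ θ : ℝ, HasDerivAt φ (-2 * Real.sin (2*θ - L)) θ := by
    intro θ
    have h1 : HasDerivAt (fun x : ℝ => 2*x - L) 2 θ := by
      simpa using ((hasDerivAt_id θ).const_mul 2).sub_const L
    have h2 : HasDerivAt φ (-Real.sin (2*θ - L) * 2) θ :=
      by rw [hφ_def]; exact (Real.hasDerivAt_cos (2*θ - L)).comp θ h1
    convert h2 using 1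
    ring
  have hφpos : ∀ θ ∈ s, 0 < φ θ := by
    intro θ hθ
    have h1 : -(π/2) < 2*θ - L := by
      have := hθ.1; linarith
    have h2 : 2*θ - L < π/2 := by
      have := hθ.2; linarith
    exact Real.cos_pos_of_mem_Ioo ⟨h1, h2⟩
  have hπ : (0:ℝ) < π / 2 := by positivity
  -- the Wronskian-type function F
  set F : ℝ → ℝ := fun θ => G1 θ * φ θ - G θ * (-2 * Real.sin (2*θ - L)) with hF_def
  have hFd : ∀ θ ∈ s, HasDerivWithinAt F (g θ * φ θ) s θ := by
    intro θ hθ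
    have h1 : HasDerivWithinAt (fun x => G1 x * φ x)
        (G2 θ * φ θ + G1 θ * (-2 * Real.sin (2*θ - L))) s θ :=
      (hG1d θ hθ).mul ((hφd θ).hasDerivWithinAt)
    have hsin : ∀ x : ℝ, HasDerivAt (fun y : ℝ => -2 * Real.sin (2*y - L))
        (-2 * (Real.cos (2*x - L) * 2)) x := by
      intro x
      have hlin : HasDerivAt (fun y : ℝ => 2*y - L) 2 x := by
        simpa using ((hasDerivAt_id x).const_mul 2).sub_const L
      exact ((Real.hasDerivAt_sin (2*x - L)).comp x hlin).const_mul (-2)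
    have h2 : HasDerivWithinAt (fun x => G x * (-2 * Real.sin (2*x - L)))
        (G1 θ * (-2 * Real.sin (2*θ - L)) + G θ * (-2 * (Real.cos (2*θ - L) * 2))) s θ :=
      (hGd θ hθ).mul ((hsin θ).hasDerivWithinAt)
    have h3 := h1.sub h2
    have hkey : G2 θ = g θ - 4 * G θ := by
      have := hGeq θ hθ
      rw [hiter θ hθ] at this
      linarith
    have : G2 θ * φ θ + G1 θ * (-2 * Real.sin (2*θ - L)) -
        (G1 θ * (-2 * Real.sin (2*θ - L)) + G θ * (-2 * (Real.cos (2*θ - L) * 2)))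
        = g θ * φ θ := by
      rw [hkey]; simp only [hφ_def]; ring
    rw [this] at h3
    exact h3
  have hFcont : ContinuousOn F s := by
    apply ContinuousOn.sub
    · exact (hG1C1.continuousOn).mul ((Real.continuous_cos.comp
        (by continuity)).continuousOn)
    · exact (hGC2.continuousOn).mul (by fun_prop)
  have hint : interior s = Ioo 0 L := interior_Icc
  -- F is monotone
  have hFmono : MonotoneOn F s := by
    apply monotoneOn_of_deriv_nonneg (convex_Icc 0 L) hFcont
    · intro x hx
      rw [hint] at hx
      have hxs : x ∈ s := Ioo_subset_Icc_self hx
      have := (hFd x hxs).hasDerivAt (Icc_mem_nhds hx.1 hx.2)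
      rw [hint]
      exact this.differentiableAt.differentiableWithinAt
    · intro x hx
      rw [hint] at hx
      have hxs : x ∈ s := Ioo_subset_Icc_self hx
      have hd := (hFd x hxs).hasDerivAt (Icc_mem_nhds hx.1 hx.2)
      rw [hd.deriv]
      exact mul_nonneg (hgpos x hxs) (hφpos x hxs).le
  -- the ratio w = G / φ
  set w : ℝ → ℝ := fun θ => G θ / φ θ with hw_def
  have hwd : ∀ θ ∈ s, HasDerivWithinAt w (F θ / (φ θ)^2) s θ := by
    intro θ hθ
    have h := (hGd θ hθ).div ((hφd θ).hasDerivWithinAt) (hφpos θ hθ).ne'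
    rw [hw_def, hF_def]
    exact h
  have hφcont : ContinuousOn φ s := by
    rw [hφ_def]
    exact (Real.continuous_cos.comp (by fun_prop)).continuousOn
  have hwcont : ContinuousOn w s := by
    rw [hw_def]
    exact hGC2.continuousOn.div hφcont (fun x hx => (hφpos x hx).ne')
  have hw0 : w 0 = 0 := by simp [hw_def, hbc0]
  have hwL : w L = 0 := by simp [hw_def, hbcL]
  -- main argument
  intro θ hθ
  have hGle : G θ ≤ 0 := by
    have hwθ : w θ ≤ 0 := by
      rcases le_or_gt (F θ) 0 with hFθ | hFθ
      · -- F ≤ 0 on [0, θ], so w is antitone there; w θ ≤ w 0 = 0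
        have hsub : Icc (0:ℝ) θ ⊆ s := Icc_subset_Icc le_rfl hθ.2
        have hanti : AntitoneOn w (Icc 0 θ) := by
          apply antitoneOn_of_deriv_nonpos (convex_Icc 0 θ) (hwcont.mono hsub)
          · intro x hx
            rw [interior_Icc] at hx
            have hxs : x ∈ s := hsub (Ioo_subset_Icc_self hx)
            have hd := (hwd x hxs).hasDerivAt
              (Icc_mem_nhds hx.1 (lt_of_lt_of_le hx.2 hθ.2))
            rw [interior_Icc]
            exact hd.differentiableAt.differentiableWithinAt
          · intro x hx
            rw [interior_Icc] at hx
            have hxs : x ∈ s := hsub (Ioo_subset_Icc_self hx)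
            have hd := (hwd x hxs).hasDerivAt
              (Icc_mem_nhds hx.1 (lt_of_lt_of_le hx.2 hθ.2))
            rw [hd.deriv]
            apply div_nonpos_of_nonpos_of_nonneg
            · exact le_trans (hFmono hxs hθ hx.2.le) hFθ
            · positivity
        have := hanti (left_mem_Icc.mpr hθ.1) (right_mem_Icc.mpr hθ.1) hθ.1
        rwa [hw0] at this
      · -- F > 0 on [θ, L], so w is monotone there; w θ ≤ w L = 0
        have hsub : Icc θ L ⊆ s := Icc_subset_Icc hθ.1 le_rfl
        have hmono : MonotoneOn w (Icc θ L) := by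
          apply monotoneOn_of_deriv_nonneg (convex_Icc θ L) (hwcont.mono hsub)
          · intro x hx
            rw [interior_Icc] at hx
            have hxs : x ∈ s := hsub (Ioo_subset_Icc_self hx)
            have hd := (hwd x hxs).hasDerivAt
              (Icc_mem_nhds (lt_of_le_of_lt hθ.1 hx.1) hx.2)
            rw [interior_Icc]
            exact hd.differentiableAt.differentiableWithinAt
          · intro x hx
            rw [interior_Icc] at hx
            have hxs : x ∈ s := hsub (Ioo_subset_Icc_self hx)
            have hd := (hwd x hxs).hasDerivAt
              (Icc_mem_nhds (lt_of_le_of_lt hθ.1 hx.1) hx.2)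
            rw [hd.deriv]
            apply div_nonneg
            · exact le_trans hFθ.le (hFmono hθ hxs hx.1.le)
            · positivity
        have := hmono (left_mem_Icc.mpr hθ.2) (right_mem_Icc.mpr hθ.2) hθ.2
        rwa [hwL] at this
    have hc := hφpos θ hθ
    rcases div_nonpos_iff.mp hwθ with ⟨h1, h2⟩ | ⟨h1, h2⟩
    · linarith
    · exact h1
  refine ⟨hGle, ?_⟩
  have := hGeq θ hθ
  linarith
end
end
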